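/- arXiv:1201.2606 — 5 statements merged into one kernel-verified Lean document; each statement's English description precedes it below -/
import Mathlib

section
/- Let M be a d×d integer dilation matrix with digit set D(M) = {s_0,…,s_{m−1}}, and let c ∈ (1/2)ℤ^d. A trigonometric polynomial m_0 is symmetric with respect to c in the sense that h_n = h_{2c−n} for all n ∈ ℤ^d if and only if its polyphase components satisfy μ_{0k}(ξ) = e^{2πi(M^{−1}(2c−s_k−s_l),ξ)} μ_{0l}(−ξ) for each k, where l ∈ {0,…,m−1} is the unique index with M^{−1}(2c−s_k−s_l) ∈ ℤ^d. -/
open Complex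

/-- The trigonometric polynomial with (finitely supported) coefficients `h`. -/
noncomputable def trig {d : ℕ} (h : (Fin d → ℤ) →₀ ℂ) (ξ : Fin d → ℝ) : ℂ :=
  h.sum fun k a => a * Complex.exp (2 * (Real.pi : ℂ) * Complex.I * ∑ j, (k j : ℂ) * (ξ j : ℂ))

/-- A dilation matrix: an integer matrix all of whose (complex) eigenvalues
exceed `1` in modulus. -/
def IsDilation {d : ℕ} (M : Matrix (Fin d) (Fin d) ℤ) : Prop :=
  ∀ μ : ℂ, (Matrix.charpoly (M.map (Int.cast : ℤ → ℂ))).IsRoot μ → 1 < ‖μ‖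


set_option maxHeartbeats 1000000

open Complex Function

noncomputable def EE {d : ℕ} (ξ : Fin d → ℝ) (p : Fin d → ℤ) : ℂ :=
  Complex.exp (2 * (Real.pi : ℂ) * Complex.I * ∑ j, (p j : ℂ) * (ξ j : ℂ))

lemma EE_ne_zero {d : ℕ} (ξ : Fin d → ℝ) (p : Fin d → ℤ) : EE ξ p ≠ 0 :=
  Complex.exp_ne_zero _

lemma EE_mul {d : ℕ} (ξ : Fin d → ℝ) (p q : Fin d → ℤ) :
    EE ξ p * EE ξ q = EE ξ (p + q) := by
  unfold EE
  rw [← Complex.exp_add]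
  congr 1
  rw [← mul_add, ← Finset.sum_add_distrib]
  refine congrArg _ (Finset.sum_congr rfl fun j _ => ?_)
  push_cast [Pi.add_apply]
  ring

lemma EE_neg {d : ℕ} (ξ : Fin d → ℝ) (p : Fin d → ℤ) :
    EE (-ξ) p = EE ξ (-p) := by
  unfold EE
  congr 1
  refine congrArg _ (Finset.sum_congr rfl fun j _ => ?_)
  push_cast [Pi.neg_apply]
  ring

lemma EE_cancel {d : ℕ} (ξ : Fin d → ℝ) (p q : Fin d → ℤ) :
    EE ξ p * EE (-ξ) (p - q) = EE ξ q := by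
  rw [EE_neg, EE_mul]
  congr 1
  abel

/-- The character on `ℝ^d` given by `b : ℤ^d`. -/
noncomputable def charE {d : ℕ} (b : Fin d → ℤ) :
    Multiplicative (Fin d → ℝ) →* ℂ where
  toFun ξ := Complex.exp (2 * (Real.pi : ℂ) * Complex.I *
    ∑ j, (b j : ℂ) * ((Multiplicative.toAdd ξ) j : ℂ))
  map_one' := by
    simp only [toAdd_one, Pi.zero_apply, Complex.ofReal_zero, mul_zero, Finset.sum_const_zero,
      mul_zero, Complex.exp_zero]
  map_mul' x y := by
    simp only [toAdd_mul, Pi.add_apply, Complex.ofReal_add, mul_add, Finset.sum_add_distrib,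
      ← Complex.exp_add]

lemma charE_apply {d : ℕ} (b : Fin d → ℤ) (ξ : Multiplicative (Fin d → ℝ)) :
    charE b ξ = EE (Multiplicative.toAdd ξ) b := rfl

lemma charE_inj {d : ℕ} : Function.Injective (charE (d := d)) := by
  intro b b' hbb
  by_contra hne
  obtain ⟨j, hj⟩ := Function.ne_iff.mp hne
  set a : ℤ := b j - b' j with ha
  have ha0 : (a : ℂ) ≠ 0 := by
    simpa [ha, sub_eq_zero] using hj
  set t : ℝ := (2 * (a : ℝ))⁻¹ with ht
  have hev := DFunLike.congr_fun hbb (Multiplicative.ofAdd (Pi.single j t))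
  rw [charE_apply, charE_apply, toAdd_ofAdd] at hev
  unfold EE at hev
  have hsum : ∀ b0 : Fin d → ℤ, ∑ i, (b0 i : ℂ) * ((Pi.single j t : Fin d → ℝ) i : ℂ)
      = (b0 j : ℂ) * (t : ℂ) := by
    intro b0
    have hstep := Finset.sum_eq_single_of_mem (f := fun i => (b0 i : ℂ) * ((Pi.single j t : Fin d → ℝ) i : ℂ))
      j (Finset.mem_univ j) (fun i _ hij => by rw [Pi.single_eq_of_ne hij]; simp)
    rw [hstep, Pi.single_eq_same]
  rw [hsum, hsum] at hev
  have hexp : Complex.exp (2 * (Real.pi : ℂ) * Complex.I * ((b j : ℂ) * t - (b' j : ℂ) * t)) = 1 := by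
    rw [mul_sub, Complex.exp_sub, hev, div_self (Complex.exp_ne_zero _)]
  have harg : 2 * (Real.pi : ℂ) * Complex.I * ((b j : ℂ) * t - (b' j : ℂ) * t)
      = (Real.pi : ℂ) * Complex.I := by
    have h2 : ((b j : ℂ) - (b' j : ℂ)) * t = 2⁻¹ := by
      have hac : ((b j : ℂ) - (b' j : ℂ)) = (a : ℂ) := by push_cast [ha]; ring
      rw [ht, hac]
      push_cast
      rw [mul_inv]
      field_simp
    calc 2 * (Real.pi : ℂ) * Complex.I * ((b j : ℂ) * t - (b' j : ℂ) * t)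
        = 2 * (Real.pi : ℂ) * Complex.I * (((b j : ℂ) - (b' j : ℂ)) * t) := by ring
      _ = (Real.pi : ℂ) * Complex.I := by rw [h2]; ring
  rw [harg, Complex.exp_pi_mul_I] at hexp
  norm_num at hexp

/-- Uniqueness of Fourier coefficients via Dedekind independence of characters. -/
lemma coeff_zero {d : ℕ} (c : (Fin d → ℤ) → ℂ) (hc : (Function.support c).Finite)
    (h0 : ∀ ξ : Fin d → ℝ, ∑ᶠ b, c b * EE ξ b = 0) : ∀ b, c b = 0 := by
  have li : LinearIndependent ℂ
      ((fun f : Multiplicative (Fin d → ℝ) →* ℂ => (f : Multiplicative (Fin d → ℝ) → ℂ)) ∘ charE) :=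
    (linearIndependent_monoidHom (Multiplicative (Fin d → ℝ)) ℂ).comp charE charE_inj
  have key := linearIndependent_iff'.mp li hc.toFinset c ?_
  · intro b
    by_cases hb : b ∈ hc.toFinset
    · exact key b hb
    · simpa using (Set.Finite.mem_toFinset hc).not.mp hb
  · funext ξ
    rw [Finset.sum_apply]
    have hterm : ∀ b, (c b • ((fun f : Multiplicative (Fin d → ℝ) →* ℂ =>
        (f : Multiplicative (Fin d → ℝ) → ℂ)) ∘ charE) b) ξ = c b * EE (Multiplicative.toAdd ξ) b := by
      intro b
      rw [Pi.smul_apply, smul_eq_mul, comp_apply, charE_apply]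
    rw [Finset.sum_congr rfl fun b _ => hterm b, ← finsum_eq_sum_of_support_subset]
    · exact h0 _
    · intro b hb
      rw [Set.Finite.coe_toFinset]
      exact fun hcb => hb (by simp [hcb])



open Complex

/-- Lemma 5 of the paper: `m₀` is point symmetric with respect to `c` (i.e.
`h_n = h_{2c-n}`, where `c2 = 2c ∈ ℤ^d`) iff its polyphase components satisfy
`μ_{0k}(ξ) = e^{2πi(M⁻¹(2c-sₖ-sₗ),ξ)} μ_{0l}(-ξ)` where `l` is the unique index
with `M⁻¹(2c-sₖ-sₗ) ∈ ℤ^d`. -/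
theorem stmt7 {d : ℕ} (M : Matrix (Fin d) (Fin d) ℤ) (hM : IsDilation M)
    (m : ℕ) (hm : m = M.det.natAbs)
    (s : Fin m → (Fin d → ℤ))
    (hdig : ∀ n : Fin d → ℤ, ∃! k : Fin m, ∃ p : Fin d → ℤ, n = M.mulVec p + s k)
    (c2 : Fin d → ℤ)
    (h : (Fin d → ℤ) →₀ ℂ)
    (μ : Fin m → (Fin d → ℝ) → ℂ)
    (hμ : ∀ k (ξ : Fin d → ℝ), μ k ξ =
      (1 / Real.sqrt m : ℝ) * ∑ᶠ p : Fin d → ℤ,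
        h (M.mulVec p + s k) *
          Complex.exp (2 * (Real.pi : ℂ) * Complex.I * ∑ j, (p j : ℂ) * (ξ j : ℂ))) :
    (∀ n : Fin d → ℤ, h n = h (c2 - n)) ↔
    (∀ k l : Fin m, ∀ p : Fin d → ℤ, M.mulVec p = c2 - s k - s l →
      ∀ ξ : Fin d → ℝ, μ k ξ =
        Complex.exp (2 * (Real.pi : ℂ) * Complex.I * ∑ j, (p j : ℂ) * (ξ j : ℂ)) *
          μ l (-ξ)) := by
  classical
  -- the determinant of `M` is nonzero
  have hdet : M.det ≠ 0 := by
    intro h0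
    have hc0 : (M.map (Int.cast : ℤ → ℂ)).det = 0 := by
      have := (Int.castRingHom ℂ).map_det M
      rw [h0] at this
      simpa using this.symm
    have hcoeff := Matrix.det_eq_sign_charpoly_coeff (M.map (Int.cast : ℤ → ℂ))
    rw [hc0] at hcoeff
    have hzero : (Matrix.charpoly (M.map (Int.cast : ℤ → ℂ))).coeff 0 = 0 := by
      rcases mul_eq_zero.mp hcoeff.symm with h1 | h1
      · exact absurd h1 (pow_ne_zero _ (by norm_num))
      · exact h1
    have hroot : (Matrix.charpoly (M.map (Int.cast : ℤ → ℂ))).IsRoot 0 := by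
      rw [Polynomial.IsRoot, ← Polynomial.coeff_zero_eq_eval_zero, hzero]
    have := hM 0 hroot
    simp only [norm_zero] at this
    exact absurd this (by norm_num)
  -- `mulVec` by `M` is injective
  have hinj : Function.Injective (M.mulVec : (Fin d → ℤ) → (Fin d → ℤ)) := by
    intro p q hpq
    have hadj := congrArg (fun v => (Matrix.adjugate M).mulVec v) hpq
    simp only [Matrix.mulVec_mulVec, Matrix.adjugate_mul, Matrix.smul_mulVec,
      Matrix.one_mulVec] at hadj
    funext i
    have := congrFun hadj i
    simp only [Pi.smul_apply, smul_eq_mul] at this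
    exact mul_left_cancel₀ hdet this
  -- basic injective maps
  have hinj1 : ∀ k : Fin m, Function.Injective fun a : Fin d → ℤ => M.mulVec a + s k := by
    intro k a b hab
    exact hinj (by simpa using hab)
  have hinj2 : ∀ (l : Fin m) (p : Fin d → ℤ),
      Function.Injective fun a : Fin d → ℤ => M.mulVec (p - a) + s l := by
    intro l p a b hab
    have : p - a = p - b := hinj (by simpa using hab)
    have := sub_right_injective this
    exact this
  -- finiteness of supports
  have hfin' : ∀ f : (Fin d → ℤ) → (Fin d → ℤ), Function.Injective f →
      (Function.support fun a => h (f a)).Finite := by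
    intro f hf
    apply Set.Finite.subset ((h.support.finite_toSet).preimage hf.injOn)
    intro a ha
    simpa [Set.mem_preimage, Finsupp.mem_support_iff] using ha
  have hfin : ∀ f : (Fin d → ℤ) → (Fin d → ℤ), Function.Injective f →
      ∀ g : (Fin d → ℤ) → ℂ, (Function.support fun a => h (f a) * g a).Finite := by
    intro f hf g
    apply Set.Finite.subset (hfin' f hf)
    intro a ha
    exact left_ne_zero_of_mul ha
  -- constants
  have hmpos : 0 < m := by
    rw [hm]
    exact Int.natAbs_pos.mpr hdet
  have hcne : ((1 / Real.sqrt m : ℝ) : ℂ) ≠ 0 := by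
    rw [Complex.ofReal_ne_zero]
    refine one_div_ne_zero (ne_of_gt (Real.sqrt_pos.mpr ?_))
    exact_mod_cast hmpos
  -- `hμ` in terms of `EE`
  have hμE : ∀ k (ξ : Fin d → ℝ), μ k ξ =
      ((1 / Real.sqrt m : ℝ) : ℂ) * ∑ᶠ a : Fin d → ℤ, h (M.mulVec a + s k) * EE ξ a :=
    fun k ξ => hμ k ξ
  -- key computation
  have hkey : ∀ (l : Fin m) (p : Fin d → ℤ) (ξ : Fin d → ℝ),
      EE ξ p * ∑ᶠ a : Fin d → ℤ, h (M.mulVec a + s l) * EE (-ξ) a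
        = ∑ᶠ a : Fin d → ℤ, h (M.mulVec (p - a) + s l) * EE ξ a := by
    intro l p ξ
    have h1 : (∑ᶠ a : Fin d → ℤ, h (M.mulVec a + s l) * EE (-ξ) a)
        = ∑ᶠ a : Fin d → ℤ, h (M.mulVec (p - a) + s l) * EE (-ξ) (p - a) :=
      (finsum_comp_equiv (Equiv.subLeft p)).symm
    rw [h1, mul_finsum _ _]
    exact finsum_congr fun a => by rw [mul_left_comm, EE_cancel]
  constructor
  · -- symmetric coefficients imply the polyphase identity
    intro hsym k l p hp ξ
    have harith : ∀ a : Fin d → ℤ, M.mulVec (p - a) + s l = c2 - (M.mulVec a + s k) := by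
      intro a
      rw [Matrix.mulVec_sub, hp]
      abel
    rw [hμE k ξ, hμE l (-ξ)]
    rw [show Complex.exp (2 * (Real.pi : ℂ) * Complex.I * ∑ j, (p j : ℂ) * ((ξ j : ℝ) : ℂ))
        = EE ξ p from rfl]
    rw [mul_left_comm, hkey l p ξ]
    congr 1
    exact finsum_congr fun a => by rw [harith a, ← hsym (M.mulVec a + s k)]
  · -- polyphase identity implies symmetry of coefficients
    intro hpoly n
    obtain ⟨k, ⟨q, hq⟩, -⟩ := hdig n
    obtain ⟨l, ⟨r, hr⟩, -⟩ := hdig (c2 - n)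
    have h1 : M.mulVec q = n - s k := by rw [hq]; abel
    have h2 : M.mulVec r = (c2 - n) - s l := by rw [hr]; abel
    have hp : M.mulVec (q + r) = c2 - s k - s l := by
      rw [Matrix.mulVec_add, h1, h2]
      abel
    have hid := hpoly k l (q + r) hp
    set g : (Fin d → ℤ) → ℂ :=
      fun a => h (M.mulVec a + s k) - h (M.mulVec ((q + r) - a) + s l) with hg
    have hgfin : (Function.support g).Finite := by
      apply Set.Finite.subset ((hfin' _ (hinj1 k)).union (hfin' _ (hinj2 l (q + r))))
      intro a ha
      by_contra hcon
      simp only [Set.mem_union, Function.mem_support, not_or, not_not] at hcon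
      exact ha (by simp [hg, hcon.1, hcon.2])
    have hg0 : ∀ ξ : Fin d → ℝ, ∑ᶠ a : Fin d → ℤ, g a * EE ξ a = 0 := by
      intro ξ
      have hsplit : (∑ᶠ a : Fin d → ℤ, g a * EE ξ a)
          = (∑ᶠ a : Fin d → ℤ, h (M.mulVec a + s k) * EE ξ a)
            - ∑ᶠ a : Fin d → ℤ, h (M.mulVec ((q + r) - a) + s l) * EE ξ a := by
        rw [← finsum_sub_distrib (hfin _ (hinj1 k) _) (hfin _ (hinj2 l (q + r)) _)]
        exact finsum_congr fun a => by rw [hg]; ring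
      rw [hsplit, sub_eq_zero, ← hkey l (q + r) ξ]
      have hξ := hid ξ
      rw [hμE k ξ, hμE l (-ξ)] at hξ
      apply mul_left_cancel₀ hcne
      rw [hξ, mul_left_comm]
      rfl
    have hgz := coeff_zero g hgfin hg0 q
    rw [hg] at hgz
    simp only [add_sub_cancel_left] at hgz
    rw [← hq, ← hr] at hgz
    exact sub_eq_zero.mp hgz
end

section
/- Let M be a d×d integer dilation matrix with digits chosen so that M^{−1}s_k ∈ [0,1)^d for all k, and let c ∈ (1/2)ℤ^d. Then the number of indices j ∈ {0,…,m−1} such that M^{−1}(2c−2s_j) ∈ ℤ^d is at most 2^d. -/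
/-- If the digits satisfy `M⁻¹sₖ ∈ [0,1)^d` and `2c = c2 ∈ ℤ^d`, then the number of
indices `j` with `M⁻¹(2c - 2sⱼ) ∈ ℤ^d` is at most `2^d`. -/
theorem stmt8 {d : ℕ} (M : Matrix (Fin d) (Fin d) ℤ) (hM : IsDilation M)
    (m : ℕ) (hm : m = M.det.natAbs)
    (s : Fin m → (Fin d → ℤ))
    (hdig : ∀ n : Fin d → ℤ, ∃! k : Fin m, ∃ p : Fin d → ℤ, n = M.mulVec p + s k)
    (hcube : ∀ k : Fin m, ∀ j : Fin d,
      ((M.map (Int.cast : ℤ → ℝ))⁻¹.mulVec (fun i => (s k i : ℝ))) j ∈ Set.Ico (0 : ℝ) 1)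
    (c2 : Fin d → ℤ) :
    Nat.card {j : Fin m // ∃ p : Fin d → ℤ, M.mulVec p = c2 - 2 • s j} ≤ 2 ^ d := by
  classical
  -- determinant nonzero over ℝ
  have hdet : ((M.det : ℤ) : ℝ) ≠ 0 := by
    intro h
    have hz : M.det = 0 := by exact_mod_cast h
    have hroot : (Matrix.charpoly (M.map (Int.cast : ℤ → ℂ))).IsRoot 0 := by
      have hdc : (M.map (Int.cast : ℤ → ℂ)).det = 0 := by
        have := RingHom.map_det (Int.castRingHom ℂ) M
        simp only [RingHom.mapMatrix_apply] at this
        rw [show (Int.cast : ℤ → ℂ) = (Int.castRingHom ℂ) from rfl, ← this, hz]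
        simp
      have h2 := Matrix.det_eq_sign_charpoly_coeff (M.map (Int.cast : ℤ → ℂ))
      rw [hdc] at h2
      have hc0 : (Matrix.charpoly (M.map (Int.cast : ℤ → ℂ))).coeff 0 = 0 := by
        rcases Nat.even_or_odd (Fintype.card (Fin d)) with he | ho
        · simpa [he.neg_one_pow] using h2.symm
        · simpa [ho.neg_one_pow, neg_eq_zero] using h2.symm
      simpa [Polynomial.IsRoot, ← Polynomial.coeff_zero_eq_eval_zero] using hc0
    have := hM 0 hroot
    simp at this
    exact absurd this (by norm_num)
  set Mr : Matrix (Fin d) (Fin d) ℝ := M.map (Int.cast : ℤ → ℝ) with hMr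
  have hMrdet : IsUnit Mr.det := by
    have : Mr.det = ((M.det : ℤ) : ℝ) := by
      have := RingHom.map_det (Int.castRingHom ℝ) M
      simp only [RingHom.mapMatrix_apply] at this
      rw [hMr, show (Int.cast : ℤ → ℝ) = (Int.castRingHom ℝ) from rfl, this]
    rw [this]
    exact isUnit_iff_ne_zero.2 hdet
  have hinv : ∀ x : Fin d → ℝ, Mr⁻¹.mulVec (Mr.mulVec x) = x := by
    intro x
    rw [Matrix.mulVec_mulVec, Matrix.nonsing_inv_mul _ hMrdet, Matrix.one_mulVec]
  have hcast : ∀ p : Fin d → ℤ, Mr.mulVec (fun i => (p i : ℝ)) = fun i => ((M.mulVec p i : ℤ) : ℝ) := by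
    intro p
    funext i
    simp [Matrix.mulVec, dotProduct, hMr, Matrix.map_apply]
  set v : Fin d → ℝ := Mr⁻¹.mulVec (fun i => (c2 i : ℝ)) with hv
  set T := {j : Fin m // ∃ p : Fin d → ℤ, M.mulVec p = c2 - 2 • s j} with hT
  -- chosen p for each j
  have key : ∀ (j : T) (p : Fin d → ℤ), M.mulVec p = c2 - 2 • s j.1 →
      ∀ i, v i - 2 < (p i : ℝ) ∧ (p i : ℝ) ≤ v i := by
    intro j p hp i
    have hℝ : (fun i => (p i : ℝ)) = v - 2 • Mr⁻¹.mulVec (fun i => (s j.1 i : ℝ)) := by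
      have h1 : Mr.mulVec (fun i => (p i : ℝ)) =
          (fun i => (c2 i : ℝ)) - 2 • (fun i => (s j.1 i : ℝ)) := by
        rw [hcast]
        funext i
        simp [hp, Pi.sub_apply]
      have := congrArg (Mr⁻¹.mulVec) h1
      rw [hinv] at this
      rw [this, Matrix.mulVec_sub, hv]
      congr 1
      rw [Matrix.mulVec_smul]
    have hc := hcube j.1 i
    have he : (p i : ℝ) = v i - 2 * (Mr⁻¹.mulVec (fun i => (s j.1 i : ℝ)) i) := by
      rw [show ((p i : ℝ)) = (fun i => (p i : ℝ)) i from rfl, hℝ]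
      simp [Pi.sub_apply]
    constructor
    · rw [he]; nlinarith [hc.1, hc.2]
    · rw [he]; nlinarith [hc.1, hc.2]
  -- injection into Fin d → Fin 2
  have hchoice : ∀ j : T, M.mulVec (Classical.choose j.2) = c2 - 2 • s j.1 :=
    fun j => Classical.choose_spec j.2
  set P : T → (Fin d → ℤ) := fun j => Classical.choose j.2 with hP
  have hPmem : ∀ (j : T) (i : Fin d), P j i = ⌊v i⌋ ∨ P j i = ⌊v i⌋ - 1 := by
    intro j i
    obtain ⟨h1, h2⟩ := key j (P j) (hchoice j) i
    have hub : P j i ≤ ⌊v i⌋ := Int.le_floor.2 h2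
    have hlb : ⌊v i⌋ - 1 ≤ P j i := by
      have : (⌊v i⌋ : ℝ) ≤ v i := Int.floor_le _
      have : (⌊v i⌋ : ℝ) - 2 < (P j i : ℝ) := by linarith
      have := Int.lt_iff_add_one_le.mp (by exact_mod_cast this : ⌊v i⌋ - 2 < P j i)
      omega
    omega
  have hPinj : Function.Injective P := by
    intro j j' hpp
    have h2 : c2 - 2 • s j.1 = c2 - 2 • s j'.1 := by
      rw [← hchoice j, ← hchoice j']
      exact congrArg M.mulVec hpp
    have hs : s j.1 = s j'.1 := by
      funext i
      have := congrFun h2 i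
      simp [Pi.sub_apply] at this
      omega
    obtain ⟨k, _, huniq⟩ := hdig (s j.1)
    have e1 : j.1 = k := huniq j.1 ⟨0, by simp⟩
    have e2 : j'.1 = k := huniq j'.1 ⟨0, by simp [hs]⟩
    exact Subtype.ext (e1.trans e2.symm)
  set F : T → (Fin d → Fin 2) := fun j i => if P j i = ⌊v i⌋ then 1 else 0 with hF
  have hFinj : Function.Injective F := by
    intro j j' h
    apply hPinj
    funext i
    have hi := congrFun h i
    simp only [hF] at hi
    rcases hPmem j i with ha | ha <;> rcases hPmem j' i with hb | hb <;>
      simp [ha, hb] at hi ⊢ <;> omega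
  calc Nat.card T ≤ Nat.card (Fin d → Fin 2) := Nat.card_le_card_of_injective F hFinj
    _ = 2 ^ d := by simp [Nat.card_eq_fintype_card]
end

section
/- Let n ∈ ℕ and let T be a real-valued trigonometric polynomial on ℝ^d with D^β T(0) = 0 for all multi-indices β with [β] < n. Then there exist real-valued trigonometric polynomials Ã_α and B̃_α, for multi-indices α with [α] = n, such that T(ξ) = Σ_{[α]=n} ( Ã_α(ξ)·Re Π_α(ξ) + B̃_α(ξ)·Im Π_α(ξ) ). -/
open Complex

/-- Partial derivative in the `j`-th coordinate. -/
noncomputable def pderiv' {d : ℕ} (j : Fin d) (f : (Fin d → ℝ) → ℂ) : (Fin d → ℝ) → ℂ :=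
  fun ξ => deriv (fun s : ℝ => f (Function.update ξ j s)) (ξ j)

/-- The partial derivative `D^β` of multi-order `β`. -/
noncomputable def mderiv {d : ℕ} (β : Fin d → ℕ) (f : (Fin d → ℝ) → ℂ) : (Fin d → ℝ) → ℂ :=
  ((List.ofFn fun j : Fin d => (pderiv' j)^[β j]).foldr (· ∘ ·) id) f

/-- `[β] = ∑ⱼ βⱼ`. -/
def degSum {d : ℕ} (β : Fin d → ℕ) : ℕ := ∑ j, β j

/-- `Π_α(ξ) = ∏ⱼ (1 - e^{2πiξⱼ})^{αⱼ}`. -/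
noncomputable def PiPoly {d : ℕ} (α : Fin d → ℕ) (ξ : Fin d → ℝ) : ℂ :=
  ∏ j, (1 - Complex.exp (2 * (Real.pi : ℂ) * Complex.I * (ξ j : ℂ))) ^ (α j)

/-- The (finite) set of all multi-indices `α` with `[α] = n`. -/
def msupp (d n : ℕ) : Finset (Fin d → ℕ) :=
  (Finset.Iic (fun _ : Fin d => n)).filter (fun α => degSum α = n)


namespace Stmt12

variable {d : ℕ}

/-- The character `ξ ↦ e^{2πi (k,ξ)}`. -/
noncomputable def Ech (k : Fin d → ℤ) : (Fin d → ℝ) → ℂ :=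
  fun ξ => Complex.exp (2 * (Real.pi : ℂ) * Complex.I * ∑ j, (k j : ℂ) * (ξ j : ℂ))

/-- Weighted trigonometric sums. -/
noncomputable def F (h : (Fin d → ℤ) →₀ ℂ) (c : (Fin d → ℤ) → ℂ) : (Fin d → ℝ) → ℂ :=
  fun ξ => ∑ k ∈ h.support, c k * (h k * Ech k ξ)

lemma trig_eq_F (h : (Fin d → ℤ) →₀ ℂ) : trig h = F h (fun _ => 1) := by
  funext ξ
  simp [trig, F, Finsupp.sum, Ech]

lemma F_congr (h : (Fin d → ℤ) →₀ ℂ) {c c' : (Fin d → ℤ) → ℂ} (hcc : ∀ k, c k = c' k) :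
    F h c = F h c' := by
  funext ξ; unfold F; exact Finset.sum_congr rfl fun k _ => by rw [hcc k]

lemma hasDerivAt_inner (k : Fin d → ℤ) (ξ : Fin d → ℝ) (j : Fin d) (s : ℝ) :
    HasDerivAt (fun s : ℝ => ∑ i, (k i : ℂ) * ((Function.update ξ j s i : ℝ) : ℂ))
      (k j) s := by
  have : ∀ i ∈ Finset.univ, HasDerivAt
      (fun s : ℝ => (k i : ℂ) * ((Function.update ξ j s i : ℝ) : ℂ))
      (if i = j then (k j : ℂ) else 0) s := by
    intro i _
    rcases eq_or_ne i j with rfl | hij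
    · simp only [if_pos rfl, Function.update_self]
      have h1 : HasDerivAt (fun s : ℝ => ((s : ℂ))) 1 s := by
        simpa using (hasDerivAt_id s).ofReal_comp
      simpa using h1.const_mul (k i : ℂ)
    · simp only [if_neg hij]
      have : (fun s : ℝ => (k i : ℂ) * ((Function.update ξ j s i : ℝ) : ℂ))
          = fun _ : ℝ => (k i : ℂ) * ((ξ i : ℝ) : ℂ) := by
        funext t; rw [Function.update_of_ne hij]
      rw [this]
      exact hasDerivAt_const _ _
  have := HasDerivAt.fun_sum this
  simpa using this

lemma pderiv'_F (h : (Fin d → ℤ) →₀ ℂ) (c : (Fin d → ℤ) → ℂ) (j : Fin d) :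
    pderiv' j (F h c) = F h (fun k => (2 * (Real.pi : ℂ) * Complex.I * (k j : ℂ)) * c k) := by
  funext ξ
  have key : ∀ k ∈ h.support, HasDerivAt
      (fun s : ℝ => c k * (h k * Ech k (Function.update ξ j s)))
      ((2 * (Real.pi : ℂ) * Complex.I * (k j : ℂ)) * (c k * (h k * Ech k ξ))) (ξ j) := by
    intro k _
    have h1 := (hasDerivAt_inner k ξ j (ξ j)).const_mul (2 * (Real.pi : ℂ) * Complex.I)
    have h2 := h1.cexp
    have h3 := h2.const_mul (c k * h k)
    have hupd : Function.update ξ j (ξ j) = ξ := Function.update_eq_self j ξ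
    simp only [hupd] at h3
    have e : (fun s : ℝ => c k * (h k * Ech k (Function.update ξ j s))) = fun y => c k * h k * Complex.exp (2 * (Real.pi : ℂ) * Complex.I * ∑ i, (k i : ℂ) * ((Function.update ξ j y i : ℝ) : ℂ)) := by
      funext s; unfold Ech; ring_nf
    rw [e]
    refine h3.congr_deriv ?_
    unfold Ech; ring_nf
  have hder := HasDerivAt.fun_sum key
  unfold pderiv' F
  rw [hder.deriv]
  exact Finset.sum_congr rfl fun k _ => by ring

lemma iter_pderiv'_F (h : (Fin d → ℤ) →₀ ℂ) (j : Fin d) (m : ℕ) (c : (Fin d → ℤ) → ℂ) :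
    (pderiv' j)^[m] (F h c) = F h (fun k => (2 * (Real.pi : ℂ) * Complex.I * (k j : ℂ)) ^ m * c k) := by
  induction m generalizing c with
  | zero =>
    simp only [Function.iterate_zero, id]
    exact F_congr h fun k => by ring
  | succ m ih =>
    rw [Function.iterate_succ_apply, pderiv'_F, ih]
    exact F_congr h fun k => by ring

lemma foldr_map_F (h : (Fin d → ℤ) →₀ ℂ) (β : Fin d → ℕ) (L : List (Fin d)) (c : (Fin d → ℤ) → ℂ) :
    ((L.map fun j => (pderiv' j)^[β j]).foldr (· ∘ ·) id) (F h c)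
      = F h (fun k => (L.map fun j => (2 * (Real.pi : ℂ) * Complex.I * (k j : ℂ)) ^ (β j)).prod * c k) := by
  induction L generalizing c with
  | nil =>
    simp only [List.map_nil, List.foldr_nil, id]
    exact F_congr h fun k => by simp
  | cons j L ih =>
    simp only [List.map_cons, List.foldr_cons, Function.comp_apply]
    rw [ih, iter_pderiv'_F]
    exact F_congr h fun k => by rw [List.prod_cons]; ring

lemma mderiv_trig (h : (Fin d → ℤ) →₀ ℂ) (β : Fin d → ℕ) :
    mderiv β (trig h) = F h (fun k => ∏ j, (2 * (Real.pi : ℂ) * Complex.I * (k j : ℂ)) ^ (β j)) := by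
  unfold mderiv
  rw [trig_eq_F]
  have : (List.ofFn fun j : Fin d => (pderiv' j)^[β j])
      = ((List.finRange d).map fun j => (pderiv' j)^[β j]) := List.ofFn_eq_map
  rw [this, foldr_map_F]
  refine F_congr h fun k => ?_
  rw [mul_one]
  congr 1

lemma F_at_zero (h : (Fin d → ℤ) →₀ ℂ) (c : (Fin d → ℤ) → ℂ) :
    F h c 0 = ∑ k ∈ h.support, c k * h k := by
  unfold F Ech
  refine Finset.sum_congr rfl fun k _ => ?_
  simp

/-- The moment conditions. -/
lemma moments (h : (Fin d → ℤ) →₀ ℂ) (n : ℕ)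
    (hTder : ∀ β : Fin d → ℕ, degSum β < n → mderiv β (trig h) 0 = 0)
    (β : Fin d → ℕ) (hβ : degSum β < n) :
    ∑ k ∈ h.support, h k * ∏ j, ((k j : ℂ)) ^ (β j) = 0 := by
  have h0 := hTder β hβ
  rw [mderiv_trig] at h0
  have h1 : ∑ k ∈ h.support, (∏ j, (2 * (Real.pi : ℂ) * Complex.I * (k j : ℂ)) ^ (β j)) * h k = 0 := by
    rw [← F_at_zero]; exact h0
  have h2 : ∀ k : Fin d → ℤ, (∏ j, (2 * (Real.pi : ℂ) * Complex.I * (k j : ℂ)) ^ (β j))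
      = (2 * (Real.pi : ℂ) * Complex.I) ^ (degSum β) * ∏ j, ((k j : ℂ)) ^ (β j) := by
    intro k
    rw [degSum, ← Finset.prod_pow_eq_pow_sum, ← Finset.prod_mul_distrib]
    exact Finset.prod_congr rfl fun j _ => by rw [mul_pow]
  rw [Finset.sum_congr rfl (fun k _ => by rw [h2 k])] at h1
  have h3 : (2 * (Real.pi : ℂ) * Complex.I) ^ (degSum β) ≠ 0 := by
    apply pow_ne_zero
    simp [Real.pi_ne_zero, Complex.I_ne_zero, Complex.ofReal_ne_zero]
  have h4 : (2 * (Real.pi : ℂ) * Complex.I) ^ (degSum β)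
      * ∑ k ∈ h.support, h k * ∏ j, ((k j : ℂ)) ^ (β j) = 0 := by
    rw [Finset.mul_sum]
    rw [← h1]
    exact Finset.sum_congr rfl fun k _ => by ring
  exact (mul_eq_zero.mp h4).resolve_left h3




lemma mem_msupp {n : ℕ} {α : Fin d → ℕ} : α ∈ msupp d n ↔ degSum α = n := by
  constructor
  · intro hα; exact (Finset.mem_filter.mp hα).2
  · intro hα
    refine Finset.mem_filter.mpr ⟨Finset.mem_Iic.mpr fun j => ?_, hα⟩
    calc α j ≤ ∑ i, α i := Finset.single_le_sum (fun i _ => Nat.zero_le _) (Finset.mem_univ j)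
    _ = n := hα

/-- truncation: any multi-index with large degree dominates one of degree exactly `m`. -/
lemma exists_le_degSum {β : Fin d → ℕ} {m : ℕ} (hm : m ≤ degSum β) :
    ∃ α : Fin d → ℕ, α ≤ β ∧ degSum α = m := by
  induction m with
  | zero => exact ⟨0, fun j => Nat.zero_le _, by simp [degSum]⟩
  | succ m ih =>
    obtain ⟨α, hle, hsum⟩ := ih (Nat.le_of_succ_le hm)
    have hlt : degSum α < degSum β := by omega
    have : ∃ j, α j < β j := by
      by_contra hcon
      push_neg at hcon
      have : α = β := le_antisymm hle fun j => hcon j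
      rw [this] at hlt; exact lt_irrefl _ hlt
    obtain ⟨j, hj⟩ := this
    refine ⟨Function.update α j (α j + 1), fun i => ?_, ?_⟩
    · rcases eq_or_ne i j with rfl | hij
      · simpa using hj
      · simp [Function.update_of_ne hij]; exact hle i
    · rw [degSum, Finset.sum_update_of_mem (Finset.mem_univ j)]
      rw [degSum] at hsum
      have he : α j + ∑ x ∈ Finset.univ.erase j, α x = ∑ x ∈ Finset.univ, α x :=
        Finset.add_sum_erase Finset.univ α (Finset.mem_univ j)
      rw [Finset.erase_eq] at he
      omega

/-- generalized binomial coefficient. -/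
noncomputable def cb (m : ℤ) (t : ℕ) : ℂ := (∏ i ∈ Finset.range t, ((m : ℂ) - i)) / (t.factorial)

lemma cb_zero (m : ℤ) : cb m 0 = 1 := by simp [cb]

lemma cb_zero_left {t : ℕ} (ht : 0 < t) : cb 0 t = 0 := by
  unfold cb
  rw [Finset.prod_eq_zero (Finset.mem_range.mpr ht)]
  · simp
  · simp

lemma pascal (m : ℤ) (s : ℕ) : cb (m + 1) (s + 1) = cb m (s + 1) + cb m s := by
  have hfac : ((s+1).factorial : ℂ) ≠ 0 := Nat.cast_ne_zero.mpr (Nat.factorial_ne_zero _)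
  have hfac' : ((s).factorial : ℂ) ≠ 0 := Nat.cast_ne_zero.mpr (Nat.factorial_ne_zero _)
  have hs : ((s+1).factorial : ℂ) = ((s:ℂ)+1) * s.factorial := by
    rw [Nat.factorial_succ]; push_cast; ring
  have h1 : ∏ i ∈ Finset.range (s+1), (((m+1 : ℤ) : ℂ) - i)
      = ((m:ℂ)+1) * ∏ i ∈ Finset.range s, ((m:ℂ) - i) := by
    rw [Finset.prod_range_succ']
    have hc : ∀ i ∈ Finset.range s, (((m+1 : ℤ) : ℂ) - ((i+1 : ℕ) : ℂ)) = ((m:ℂ) - i) := by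
      intro i _; push_cast; ring
    rw [Finset.prod_congr rfl hc]
    push_cast; ring
  have h2 := Finset.prod_range_succ (fun i : ℕ => ((m:ℂ) - i)) s
  unfold cb
  rw [h1, h2, hs]
  have hs1 : ((s:ℂ)+1) ≠ 0 := Nat.cast_add_one_ne_zero s
  field_simp
  ring

/-- `cb · t` is a polynomial of degree ≤ t. -/
lemma cb_poly (t : ℕ) : ∃ w : ℕ → ℂ, ∀ m : ℤ, cb m t = ∑ s ∈ Finset.range (t+1), w s * (m : ℂ)^s := by
  classical
  set P : Polynomial ℂ := ∏ i ∈ Finset.range t, (Polynomial.X - Polynomial.C (i : ℂ))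
  have hdeg : P.natDegree < t + 1 := by
    have : P.natDegree ≤ ∑ i ∈ Finset.range t, (Polynomial.X - Polynomial.C ((i : ℂ))).natDegree :=
      Polynomial.natDegree_prod_le _ _
    have h2 : ∀ i : ℕ, (Polynomial.X - Polynomial.C ((i : ℂ))).natDegree = 1 := fun i =>
      Polynomial.natDegree_X_sub_C _
    calc P.natDegree ≤ ∑ i ∈ Finset.range t, 1 := by
          refine le_trans this (le_of_eq (Finset.sum_congr rfl fun i _ => h2 i))
      _ < t + 1 := by simp
  refine ⟨fun s => ((t.factorial : ℂ))⁻¹ * P.coeff s, fun m => ?_⟩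
  have heval : P.eval (m : ℂ) = ∏ i ∈ Finset.range t, ((m : ℂ) - i) := by
    rw [Polynomial.eval_prod]
    exact Finset.prod_congr rfl fun i _ => by simp
  have := Polynomial.eval_eq_sum_range' hdeg (m : ℂ)
  rw [heval] at this
  unfold cb
  rw [this, div_eq_inv_mul, Finset.mul_sum]
  exact Finset.sum_congr rfl fun s _ => by ring

/-! ### The group algebra -/

abbrev Rd (d : ℕ) := AddMonoidAlgebra ℂ (Fin d → ℤ)

noncomputable def sj (j : Fin d) (m : ℤ) : Rd d := AddMonoidAlgebra.single (Pi.single j m) 1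

noncomputable def yj (j : Fin d) : Rd d := sj j 1 - 1

noncomputable def yprod (α : Fin d → ℕ) : Rd d := ∏ j, (yj j) ^ (α j)

noncomputable def Jid (d n : ℕ) : Ideal (Rd d) :=
  Ideal.span (Set.range fun α : (msupp d n) => yprod (α : Fin d → ℕ))

lemma sj_mul (j : Fin d) (a b : ℤ) : sj j a * sj j b = sj j (a + b) := by
  unfold sj
  rw [AddMonoidAlgebra.single_mul_single, one_mul, ← Pi.single_add]

lemma sj_zero (j : Fin d) : sj j 0 = 1 := by
  unfold sj; rw [Pi.single_zero]; rfl

lemma single_eq_prod (k : Fin d → ℤ) : AddMonoidAlgebra.single k (1 : ℂ) = ∏ j, sj j (k j) := by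
  unfold sj
  rw [AddMonoidAlgebra.prod_single]
  congr 1
  · exact (Finset.univ_sum_single k).symm
  · simp

lemma mk_smul {n : ℕ} (c : ℂ) (x : Rd d) :
    Ideal.Quotient.mk (Jid d n) (c • x) = c • Ideal.Quotient.mk (Jid d n) x := by
  rw [show (Ideal.Quotient.mk (Jid d n)) = ⇑(Ideal.Quotient.mkₐ ℂ (Jid d n)) from
    (Ideal.Quotient.mkₐ_eq_mk ℂ (Jid d n)).symm]
  exact map_smul _ c x

lemma q_yprod_eq_zero {n : ℕ} {α : Fin d → ℕ} (hα : degSum α = n) :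
    Ideal.Quotient.mk (Jid d n) (yprod α) = 0 := by
  rw [Ideal.Quotient.eq_zero_iff_mem]
  exact Ideal.subset_span ⟨⟨α, mem_msupp.mpr hα⟩, rfl⟩

lemma q_yprod_eq_zero' {n : ℕ} {β : Fin d → ℕ} (hβ : n ≤ degSum β) :
    Ideal.Quotient.mk (Jid d n) (yprod β) = 0 := by
  obtain ⟨α, hle, hsum⟩ := exists_le_degSum hβ
  have hfac : yprod β = yprod α * yprod (fun j => β j - α j) := by
    unfold yprod
    rw [← Finset.prod_mul_distrib]
    refine Finset.prod_congr rfl fun j _ => ?_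
    rw [← pow_add]
    congr 1
    show β j = α j + (β j - α j)
    have hj2 : α j ≤ β j := hle j
    omega
  rw [hfac, map_mul, q_yprod_eq_zero hsum, zero_mul]

lemma zj_pow_eq_zero {n : ℕ} (j : Fin d) :
    (Ideal.Quotient.mk (Jid d n) (yj j)) ^ n = 0 := by
  rw [← map_pow]
  have hyp : (yj j) ^ n = yprod (Pi.single j n) := by
    unfold yprod
    rw [Fintype.prod_eq_single j (fun i hij => by rw [Pi.single_eq_of_ne hij, pow_zero])]
    rw [Pi.single_eq_same]
  rw [hyp]
  exact q_yprod_eq_zero (by simp [degSum, Pi.single_apply])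

/-- truncated binomial series in the quotient. -/
noncomputable def Pq (n : ℕ) (j : Fin d) (m : ℤ) : Rd d ⧸ Jid d n :=
  ∑ t ∈ Finset.range n, cb m t • (Ideal.Quotient.mk (Jid d n) (yj j)) ^ t

lemma q_sj_one {n : ℕ} (j : Fin d) :
    Ideal.Quotient.mk (Jid d n) (sj j 1) = 1 + Ideal.Quotient.mk (Jid d n) (yj j) := by
  unfold yj; rw [map_sub, map_one]; ring

lemma Pq_mul (n : ℕ) (hn : 0 < n) (j : Fin d) (m : ℤ) :
    Pq n j m * Ideal.Quotient.mk (Jid d n) (sj j 1) = Pq n j (m + 1) := by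
  obtain ⟨nn, rfl⟩ : ∃ nn, n = nn + 1 := ⟨n - 1, by omega⟩
  set z := Ideal.Quotient.mk (Jid d (nn+1)) (yj j) with hz
  have hzn : z ^ (nn + 1) = 0 := zj_pow_eq_zero j
  rw [q_sj_one, ← hz]
  unfold Pq
  rw [mul_add, mul_one, Finset.sum_mul]
  have h2 : ∀ t, (cb m t • z ^ t) * z = cb m t • z ^ (t + 1) := by
    intro t; rw [smul_mul_assoc, ← pow_succ]
  rw [Finset.sum_congr rfl fun t _ => h2 t]
  -- drop the top term of the second sum
  have h3 : ∑ t ∈ Finset.range (nn+1), cb m t • z ^ (t+1)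
      = ∑ t ∈ Finset.range nn, cb m t • z ^ (t+1) := by
    rw [Finset.sum_range_succ, hzn, smul_zero, add_zero]
  -- reindex
  have h4 : ∑ t ∈ Finset.range nn, cb m t • z ^ (t+1)
      = ∑ t ∈ Finset.range (nn+1),
          (if t = 0 then (0:Rd d ⧸ Jid d (nn+1)) else cb m (t-1) • z ^ t) := by
    rw [Finset.sum_range_succ']
    simp
  rw [h3, h4, ← Finset.sum_add_distrib]
  refine Finset.sum_congr rfl fun t _ => ?_
  rcases t with _ | u
  · simp [cb_zero]
  · simp only [Nat.succ_ne_zero, if_false, Nat.succ_sub_one]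
    rw [← add_smul, ← pascal]

lemma q_sj (n : ℕ) (hn : 0 < n) (j : Fin d) (m : ℤ) :
    Ideal.Quotient.mk (Jid d n) (sj j m) = Pq n j m := by
  have hu : IsUnit (Ideal.Quotient.mk (Jid d n) (sj j 1)) := by
    rw [q_sj_one]
    exact IsNilpotent.isUnit_one_add ⟨n, zj_pow_eq_zero j⟩
  induction m using Int.induction_on with
  | zero =>
    rw [sj_zero, map_one]
    unfold Pq
    rw [Finset.sum_eq_single_of_mem 0 (Finset.mem_range.mpr hn)]
    · simp [cb_zero]
    · intro t _ ht
      rw [cb_zero_left (Nat.pos_of_ne_zero ht), zero_smul]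
  | succ m ih =>
    have : sj j ((m : ℤ) + 1) = sj j m * sj j 1 := (sj_mul j m 1).symm
    rw [this, map_mul, ih, Pq_mul n hn j m]
  | pred m ih =>
    have h1 : sj j (-(m:ℤ)) = sj j (-(m:ℤ) - 1) * sj j 1 := by
      rw [sj_mul]; ring_nf
    have h2 := Pq_mul n hn j (-(m:ℤ) - 1)
    have h3 : (-(m:ℤ) - 1 + 1) = -(m:ℤ) := by ring
    rw [h3] at h2
    apply hu.mul_left_injective
    show _ * _ = _ * _
    rw [← map_mul, ← h1, ih, ← h2]

lemma q_single (n : ℕ) (hn : 0 < n) (k : Fin d → ℤ) :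
    Ideal.Quotient.mk (Jid d n) (AddMonoidAlgebra.single k (1:ℂ))
      = ∑ β ∈ Fintype.piFinset (fun _ : Fin d => Finset.range n),
          (∏ j, cb (k j) (β j)) • Ideal.Quotient.mk (Jid d n) (yprod β) := by
  rw [single_eq_prod, map_prod]
  rw [Finset.prod_congr rfl (fun j _ => q_sj n hn j (k j))]
  unfold Pq
  rw [Finset.prod_univ_sum]
  refine Finset.sum_congr rfl fun β hβ => ?_
  have hsd : ∀ j : Fin d, cb (k j) (β j) • (Ideal.Quotient.mk (Jid d n) (yj j)) ^ (β j)
      = algebraMap ℂ _ (cb (k j) (β j)) * (Ideal.Quotient.mk (Jid d n) (yj j)) ^ (β j) :=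
    fun j => Algebra.smul_def (cb (k j) (β j)) ((Ideal.Quotient.mk (Jid d n) (yj j)) ^ (β j))
  rw [Finset.prod_congr rfl fun j _ => hsd j, Finset.prod_mul_distrib, ← map_prod,
    ← Algebra.smul_def]
  congr 1
  unfold yprod
  rw [map_prod]
  exact Finset.prod_congr rfl fun j _ => (map_pow _ _ _).symm

lemma momentsC (n : ℕ) (h : (Fin d → ℤ) →₀ ℂ)
    (hm : ∀ β : Fin d → ℕ, degSum β < n →
      ∑ k ∈ h.support, h k * ∏ j, ((k j : ℂ)) ^ (β j) = 0)
    (β : Fin d → ℕ) (hβ : degSum β < n) :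
    ∑ k ∈ h.support, h k * ∏ j, cb (k j) (β j) = 0 := by
  choose w hw using fun j => cb_poly (β j)
  have hexp : ∀ k : Fin d → ℤ, ∏ j, cb (k j) (β j)
      = ∑ γ ∈ Fintype.piFinset (fun j => Finset.range (β j + 1)),
          ∏ j, (w j (γ j) * ((k j : ℂ)) ^ (γ j)) := by
    intro k
    rw [Finset.prod_congr rfl fun j _ => hw j (k j), Finset.prod_univ_sum]
  calc ∑ k ∈ h.support, h k * ∏ j, cb (k j) (β j)
      = ∑ γ ∈ Fintype.piFinset (fun j => Finset.range (β j + 1)),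
          (∏ j, w j (γ j)) * ∑ k ∈ h.support, h k * ∏ j, ((k j : ℂ)) ^ (γ j) := by
        rw [Finset.sum_congr rfl fun k _ => by
          rw [hexp k, Finset.mul_sum]]
        rw [Finset.sum_comm]
        refine Finset.sum_congr rfl fun γ _ => ?_
        rw [Finset.mul_sum]
        refine Finset.sum_congr rfl fun k _ => ?_
        rw [Finset.prod_mul_distrib]
        ring
    _ = 0 := by
        refine Finset.sum_eq_zero fun γ hγ => ?_
        have hγle : degSum γ ≤ degSum β := by
          refine Finset.sum_le_sum fun j _ => ?_
          have := (Fintype.mem_piFinset.mp hγ) j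
          rw [Finset.mem_range] at this
          omega
        rw [hm γ (lt_of_le_of_lt hγle hβ), mul_zero]

lemma mem_Jid (n : ℕ) (hn : 0 < n) (h : (Fin d → ℤ) →₀ ℂ)
    (hm : ∀ β : Fin d → ℕ, degSum β < n →
      ∑ k ∈ h.support, h k * ∏ j, ((k j : ℂ)) ^ (β j) = 0) :
    (AddMonoidAlgebra.ofCoeff h : Rd d) ∈ Jid d n := by
  suffices h0 : Ideal.Quotient.mk (Jid d n) (AddMonoidAlgebra.ofCoeff h) = 0 from
    (Ideal.Quotient.eq_zero_iff_mem).mp h0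
  have hrep : (AddMonoidAlgebra.ofCoeff h : Rd d) = ∑ k ∈ h.support, h k • AddMonoidAlgebra.single k (1:ℂ) := by
    conv_lhs => rw [← AddMonoidAlgebra.sum_coeff_single (AddMonoidAlgebra.ofCoeff h)]
    rw [Finsupp.sum]
    exact Finset.sum_congr rfl fun k _ => by
      rw [AddMonoidAlgebra.smul_single', mul_one]
  rw [hrep, map_sum]
  rw [Finset.sum_congr rfl fun k _ => by rw [mk_smul, q_single n hn k]]
  rw [Finset.sum_congr rfl fun k (_ : k ∈ h.support) => Finset.smul_sum]
  rw [Finset.sum_comm]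
  refine Finset.sum_eq_zero fun β _ => ?_
  rcases lt_or_ge (degSum β) n with hlt | hge
  · have : ∀ k ∈ h.support, h k • ((∏ j, cb (k j) (β j)) •
        Ideal.Quotient.mk (Jid d n) (yprod β))
        = (h k * ∏ j, cb (k j) (β j)) • Ideal.Quotient.mk (Jid d n) (yprod β) := by
      intro k _; rw [smul_smul]
    rw [Finset.sum_congr rfl this, ← Finset.sum_smul, momentsC n h hm β hlt, zero_smul]
  · refine Finset.sum_eq_zero fun k _ => ?_
    rw [q_yprod_eq_zero' hge, smul_zero, smul_zero]

lemma exists_rep (n : ℕ) (hn : 0 < n) (h : (Fin d → ℤ) →₀ ℂ)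
    (hm : ∀ β : Fin d → ℕ, degSum β < n →
      ∑ k ∈ h.support, h k * ∏ j, ((k j : ℂ)) ^ (β j) = 0) :
    ∃ cf : (msupp d n) → Rd d, ∑ α : (msupp d n), cf α * yprod (α : Fin d → ℕ) = AddMonoidAlgebra.ofCoeff h := by
  have hmem := mem_Jid n hn h hm
  rw [Jid, Ideal.span] at hmem
  have hmem' : (AddMonoidAlgebra.ofCoeff h : Rd d) ∈ Submodule.span (Rd d)
      (Set.range fun α : (msupp d n) => yprod (α : Fin d → ℕ)) := hmem
  obtain ⟨cf, hcf⟩ := (Submodule.mem_span_range_iff_exists_fun (Rd d) (M := Rd d)).mp hmem'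
  exact ⟨cf, by simpa [smul_eq_mul] using hcf⟩


/-! ### Evaluation homomorphism -/

noncomputable def Emh : Multiplicative (Fin d → ℤ) →* ((Fin d → ℝ) → ℂ) where
  toFun k := Ech (Multiplicative.toAdd k)
  map_one' := by
    funext ξ
    unfold Ech
    simp
  map_mul' a b := by
    funext ξ
    unfold Ech
    show Complex.exp _ = Complex.exp _ * Complex.exp _
    rw [← Complex.exp_add]
    congr 1
    have : ∀ j, ((Multiplicative.toAdd (a * b)) j : ℂ) * (ξ j : ℂ)
        = ((Multiplicative.toAdd a) j : ℂ) * (ξ j : ℂ)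
          + ((Multiplicative.toAdd b) j : ℂ) * (ξ j : ℂ) := by
      intro j
      show (((Multiplicative.toAdd a + Multiplicative.toAdd b)) j : ℂ) * _ = _
      push_cast [Pi.add_apply]
      ring
    rw [Finset.sum_congr rfl fun j _ => this j, Finset.sum_add_distrib]
    ring

noncomputable def phi : Rd d →ₐ[ℂ] ((Fin d → ℝ) → ℂ) :=
  AddMonoidAlgebra.lift ℂ ((Fin d → ℝ) → ℂ) (Fin d → ℤ) Emh

lemma phi_eq_trig (g : Rd d) : phi (d := d) g = trig g.coeff := by
  funext ξ
  rw [phi, AddMonoidAlgebra.lift_apply]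
  unfold trig
  rw [Finsupp.sum, Finsupp.sum, Finset.sum_apply]
  refine Finset.sum_congr rfl fun k _ => ?_
  simp only [Pi.smul_apply, smul_eq_mul]
  rfl

lemma Ech_single (j : Fin d) (ξ : Fin d → ℝ) :
    Ech (Pi.single j (1:ℤ)) ξ = Complex.exp (2 * (Real.pi : ℂ) * Complex.I * (ξ j : ℂ)) := by
  unfold Ech
  congr 1
  have : ∀ i, (((Pi.single j (1:ℤ) : Fin d → ℤ) i : ℤ) : ℂ) * (ξ i : ℂ)
      = if i = j then (ξ j : ℂ) else 0 := by
    intro i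
    rcases eq_or_ne i j with rfl | hij
    · simp
    · rw [if_neg hij, Pi.single_eq_of_ne hij]
      simp
  rw [Finset.sum_congr rfl fun i _ => this i, Finset.sum_ite_eq' Finset.univ j]
  simp

lemma phi_sj_one (j : Fin d) (ξ : Fin d → ℝ) :
    phi (d := d) (sj j 1) ξ = Complex.exp (2 * (Real.pi : ℂ) * Complex.I * (ξ j : ℂ)) := by
  rw [phi, sj, AddMonoidAlgebra.lift_single]
  rw [← Ech_single j ξ]
  simp only [one_smul]
  rfl

lemma phi_yprod (α : Fin d → ℕ) (ξ : Fin d → ℝ) :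
    phi (d := d) (yprod α) ξ = ((-1 : ℂ)) ^ (degSum α) * PiPoly α ξ := by
  unfold yprod
  rw [map_prod]
  rw [Finset.prod_apply]
  unfold PiPoly
  rw [degSum, ← Finset.prod_pow_eq_pow_sum, ← Finset.prod_mul_distrib]
  refine Finset.prod_congr rfl fun j _ => ?_
  rw [map_pow, Pi.pow_apply]
  have h1 : phi (d := d) (yj j) ξ
      = Complex.exp (2 * (Real.pi : ℂ) * Complex.I * (ξ j : ℂ)) - 1 := by
    rw [yj, map_sub, map_one, Pi.sub_apply, Pi.one_apply, phi_sj_one]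
  rw [h1, show Complex.exp (2 * (Real.pi : ℂ) * Complex.I * (ξ j : ℂ)) - 1
      = (-1) * (1 - Complex.exp (2 * (Real.pi : ℂ) * Complex.I * (ξ j : ℂ))) by ring,
    mul_pow]

/-! ### Conjugation and real parts -/

noncomputable def conjT (g : (Fin d → ℤ) →₀ ℂ) : (Fin d → ℤ) →₀ ℂ :=
  Finsupp.mapRange (starRingEnd ℂ) (map_zero _)
    (Finsupp.equivMapDomain (Equiv.neg (Fin d → ℤ)) g)

lemma trig_conjT (g : (Fin d → ℤ) →₀ ℂ) (ξ : Fin d → ℝ) :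
    trig (conjT g) ξ = starRingEnd ℂ (trig g ξ) := by
  unfold trig conjT
  rw [Finsupp.sum_mapRange_index (fun k => by rw [zero_mul])]
  rw [Finsupp.sum_equivMapDomain]
  rw [Finsupp.sum, Finsupp.sum, map_sum]
  refine Finset.sum_congr rfl fun k _ => ?_
  rw [map_mul]
  congr 1
  rw [← Complex.exp_conj]
  congr 1
  have hneg : ∀ i : Fin d, ((((Equiv.neg (Fin d → ℤ)) k : Fin d → ℤ) i : ℤ) : ℂ) * (ξ i : ℂ)
      = -((k i : ℂ) * (ξ i : ℂ)) := by
    intro i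
    show (((-k : Fin d → ℤ) i : ℤ) : ℂ) * _ = _
    push_cast [Pi.neg_apply]
    ring
  rw [Finset.sum_congr rfl fun i _ => hneg i, Finset.sum_neg_distrib]
  rw [map_mul, map_mul, map_mul, map_sum]
  simp only [map_mul, map_ofNat, Complex.conj_ofReal, Complex.conj_I, map_intCast]
  ring

lemma trig_add (g g' : (Fin d → ℤ) →₀ ℂ) (ξ : Fin d → ℝ) :
    trig (g + g') ξ = trig g ξ + trig g' ξ := by
  unfold trig
  rw [Finsupp.sum_add_index (fun k _ => by rw [zero_mul]) (fun k _ a b => by rw [add_mul])]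

lemma trig_sub (g g' : (Fin d → ℤ) →₀ ℂ) (ξ : Fin d → ℝ) :
    trig (g - g') ξ = trig g ξ - trig g' ξ := by
  unfold trig
  rw [Finsupp.sum_sub_index (fun k a b => by rw [sub_mul])]

lemma trig_smul (c : ℂ) (g : (Fin d → ℤ) →₀ ℂ) (ξ : Fin d → ℝ) :
    trig (c • g) ξ = c * trig g ξ := by
  unfold trig
  rw [Finsupp.sum_smul_index' (fun k => by rw [zero_mul])]
  rw [Finsupp.sum, Finsupp.sum, Finset.mul_sum]
  exact Finset.sum_congr rfl fun k _ => by rw [smul_eq_mul]; ring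

noncomputable def reC (g : (Fin d → ℤ) →₀ ℂ) : (Fin d → ℤ) →₀ ℂ :=
  (2⁻¹ : ℂ) • (g + conjT g)

noncomputable def imC (g : (Fin d → ℤ) →₀ ℂ) : (Fin d → ℤ) →₀ ℂ :=
  (-(2 * Complex.I)⁻¹ : ℂ) • (g - conjT g)

lemma trig_reC (g : (Fin d → ℤ) →₀ ℂ) (ξ : Fin d → ℝ) :
    trig (reC g) ξ = (((trig g ξ).re : ℝ) : ℂ) := by
  rw [reC, trig_smul, trig_add, trig_conjT, Complex.add_conj]
  push_cast
  ring

lemma trig_imC (g : (Fin d → ℤ) →₀ ℂ) (ξ : Fin d → ℝ) :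
    trig (imC g) ξ = -(((trig g ξ).im : ℝ) : ℂ) := by
  rw [imC, trig_smul, trig_sub, trig_conjT, Complex.sub_conj]
  have : (2 * Complex.I) ≠ 0 := by simp [Complex.I_ne_zero]
  field_simp
  push_cast
  ring

end Stmt12

open Stmt12 in
/-- Lemma 10 of the paper (one direction): every real-valued trigonometric polynomial
`T` with `D^β T(0) = 0` for all `[β] < n` can be written as
`T(ξ) = Σ_{[α]=n} (Ã_α(ξ)·Re Π_α(ξ) + B̃_α(ξ)·Im Π_α(ξ))` with `Ã_α`, `B̃_α`
real-valued trigonometric polynomials. -/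
theorem stmt12 {d : ℕ} (n : ℕ) (hn : 0 < n)
    (T : (Fin d → ℝ) → ℂ)
    (hTtrig : ∃ hc : (Fin d → ℤ) →₀ ℂ, T = trig hc)
    (hTreal : ∀ ξ, (T ξ).im = 0)
    (hTder : ∀ β : Fin d → ℕ, degSum β < n → mderiv β T 0 = 0) :
    ∃ A B : (Fin d → ℕ) → (Fin d → ℝ) → ℂ,
      (∀ α : Fin d → ℕ, degSum α = n →
        (∃ hc : (Fin d → ℤ) →₀ ℂ, A α = trig hc) ∧ ∀ ξ, (A α ξ).im = 0) ∧
      (∀ α : Fin d → ℕ, degSum α = n →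
        (∃ hc : (Fin d → ℤ) →₀ ℂ, B α = trig hc) ∧ ∀ ξ, (B α ξ).im = 0) ∧
      (∀ ξ, T ξ = ∑ α ∈ msupp d n,
        (A α ξ * ((PiPoly α ξ).re : ℂ) + B α ξ * ((PiPoly α ξ).im : ℂ))) := by
  classical
  obtain ⟨hc, rfl⟩ := hTtrig
  have hm : ∀ β : Fin d → ℕ, degSum β < n →
      ∑ k ∈ hc.support, hc k * ∏ j, ((k j : ℂ)) ^ (β j) = 0 :=
    fun β hβ => moments hc n hTder β hβ
  obtain ⟨cf, hcf⟩ := exists_rep n hn hc hm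
  set G : (Fin d → ℕ) → ((Fin d → ℤ) →₀ ℂ) := fun α =>
    if hα : α ∈ msupp d n then (((-1 : ℂ)) ^ n • cf ⟨α, hα⟩).coeff else 0 with hG
  refine ⟨fun α => trig (reC (G α)), fun α => trig (imC (G α)), ?_, ?_, ?_⟩
  · intro α _
    refine ⟨⟨reC (G α), rfl⟩, fun ξ => ?_⟩
    show (trig (reC (G α)) ξ).im = 0
    rw [trig_reC]
    exact Complex.ofReal_im _
  · intro α _
    refine ⟨⟨imC (G α), rfl⟩, fun ξ => ?_⟩
    show (trig (imC (G α)) ξ).im = 0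
    rw [trig_imC]
    simp
  · intro ξ
    have key : trig hc ξ = ∑ α ∈ msupp d n, trig (G α) ξ * PiPoly α ξ := by
      have h0 : trig hc = ∑ α : (msupp d n), trig (cf α).coeff * (phi (d := d) (yprod (α : Fin d → ℕ))) := by
        rw [show trig hc = trig (AddMonoidAlgebra.ofCoeff hc).coeff from rfl, ← phi_eq_trig, ← hcf, map_sum]
        exact Finset.sum_congr rfl fun α _ => by rw [map_mul, phi_eq_trig]
      have h1 : trig hc ξ = ∑ α : (msupp d n),
          trig (cf α).coeff ξ * (phi (d := d) (yprod (α : Fin d → ℕ))) ξ := by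
        rw [h0, Finset.sum_apply]
        exact Finset.sum_congr rfl fun α _ => rfl
      rw [h1, ← Finset.sum_coe_sort (msupp d n) (fun α => trig (G α) ξ * PiPoly α ξ)]
      refine Finset.sum_congr rfl fun α _ => ?_
      have hdeg : degSum (α : Fin d → ℕ) = n := mem_msupp.mp α.2
      rw [phi_yprod, hdeg]
      have hGα : G (α : Fin d → ℕ) = ((-1 : ℂ)) ^ n • (cf α).coeff := by
        show (if hα : (α : Fin d → ℕ) ∈ msupp d n
          then (((-1 : ℂ)) ^ n • cf ⟨(α : Fin d → ℕ), hα⟩).coeff else 0) = ((-1 : ℂ)) ^ n • (cf α).coeff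
        rw [dif_pos α.2]
        rfl
      rw [hGα, trig_smul]
      ring
    have hre : trig hc ξ = (((trig hc ξ).re : ℝ) : ℂ) := by
      have := hTreal ξ
      apply Complex.ext
      · simp
      · simpa using this
    rw [hre, key]
    rw [Complex.re_sum]
    push_cast
    refine Finset.sum_congr rfl fun α _ => ?_
    rw [trig_reC, trig_imC, Complex.mul_re]
    push_cast
    ring
end

section
/- Let H be a finite group of d×d integer matrices of determinant ±1, M a dilation matrix with MEM^{−1} ∈ H for all E ∈ H, and suppose each digit s_j satisfies E s_j = M r_j^E + s_j with r_j^E ∈ ℤ^d, for all E ∈ H. Let c ∈ ℤ^d. Then a trigonometric polynomial m_0 is H-symmetric with respect to c (i.e., m_0(ξ) = e^{2πi(c−Ec,ξ)} m_0(E^*ξ) for all E ∈ H) if and only if its polyphase components satisfy μ_{0j}(ξ) = μ_{0j}(M^* E^* M^{*−1} ξ) e^{2πi(r_j^E, ξ)} e^{2πi(M^{−1}(c−Ec), ξ)} for all E ∈ H and all j. -/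
open Complex Matrix

/-! ### Auxiliary lemmas -/

/-- The basic character `e^{2πi⟨n,ξ⟩}`. -/
noncomputable def ee {d : ℕ} (n : Fin d → ℤ) (ξ : Fin d → ℝ) : ℂ :=
  Complex.exp (2 * (Real.pi : ℂ) * Complex.I * ∑ i, (n i : ℂ) * (ξ i : ℂ))

lemma ee_add {d : ℕ} (n n' : Fin d → ℤ) (ξ : Fin d → ℝ) :
    ee (n + n') ξ = ee n ξ * ee n' ξ := by
  rw [ee, ee, ee, ← Complex.exp_add]
  congr 1
  rw [← mul_add, ← Finset.sum_add_distrib]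
  congr 1
  refine Finset.sum_congr rfl fun i _ => ?_
  push_cast [Pi.add_apply]
  ring

lemma ee_add_right {d : ℕ} (n : Fin d → ℤ) (ξ η : Fin d → ℝ) :
    ee n (ξ + η) = ee n ξ * ee n η := by
  rw [ee, ee, ee, ← Complex.exp_add]
  congr 1
  rw [← mul_add, ← Finset.sum_add_distrib]
  congr 1
  refine Finset.sum_congr rfl fun i _ => ?_
  push_cast [Pi.add_apply]
  ring

/-- `ee n` as a monoid hom from `Multiplicative (Fin d → ℝ)`. -/
noncomputable def chi {d : ℕ} (n : Fin d → ℤ) : Multiplicative (Fin d → ℝ) →* ℂ where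
  toFun ξ := ee n ξ.toAdd
  map_one' := by simp [ee]
  map_mul' ξ η := by simpa using ee_add_right n ξ.toAdd η.toAdd

lemma ee_single {d : ℕ} (n : Fin d → ℤ) (i : Fin d) (t : ℝ) :
    ee n (Pi.single i t) = Complex.exp (2 * (Real.pi : ℂ) * Complex.I * ((n i : ℂ) * t)) := by
  rw [ee]
  congr 2
  rw [Finset.sum_eq_single i (fun b _ hb => by simp [Pi.single_apply, hb])
    (fun hi => absurd (Finset.mem_univ i) hi)]
  simp

lemma chi_inj {d : ℕ} : Function.Injective (chi (d := d)) := by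
  intro n n' hnn
  funext i
  by_contra hne
  have ha : ((n i : ℝ) - n' i) ≠ 0 := by
    intro h0
    apply hne
    have : (n i : ℝ) = n' i := by linarith
    exact_mod_cast this
  set t : ℝ := 1 / (2 * ((n i : ℝ) - n' i)) with ht
  have key := congrArg (fun f : Multiplicative (Fin d → ℝ) →* ℂ =>
    f (Multiplicative.ofAdd (Pi.single i t))) hnn
  simp only [chi, MonoidHom.coe_mk, OneHom.coe_mk, toAdd_ofAdd] at key
  rw [ee_single, ee_single] at key
  rw [Complex.exp_eq_exp_iff_exists_int] at key
  obtain ⟨k, hk⟩ := key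
  have h2 : ((n i : ℂ) * t) = (n' i : ℂ) * t + k := by
    have hπ : (2 * (Real.pi : ℂ) * Complex.I) ≠ 0 :=
      mul_ne_zero (mul_ne_zero two_ne_zero
        (Complex.ofReal_ne_zero.mpr Real.pi_ne_zero)) Complex.I_ne_zero
    rw [show ((k : ℂ) * (2 * (Real.pi : ℂ) * Complex.I)) =
      (2 * (Real.pi : ℂ) * Complex.I) * k from by ring] at hk
    rw [show (2 * (Real.pi : ℂ) * Complex.I * ((n' i : ℂ) * t) +
        2 * (Real.pi : ℂ) * Complex.I * k) =
      (2 * (Real.pi : ℂ) * Complex.I) * ((n' i : ℂ) * t + k) from by ring] at hk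
    exact mul_left_cancel₀ hπ hk
  have h3 : ((n i : ℝ) * t) = (n' i : ℝ) * t + k := by exact_mod_cast h2
  have h4 : ((n i : ℝ) - n' i) * t = k := by
    have hs := sub_mul ((n i : ℝ)) ((n' i : ℝ)) t
    linarith
  have h5 : ((n i : ℝ) - n' i) * t = 1 / 2 := by
    rw [ht]
    field_simp
  have h6 : (2 * k : ℝ) = 1 := by
    rw [h4] at h5
    linarith
  have h7 : (2 * k : ℤ) = 1 := by exact_mod_cast h6
  omega

lemma ee_uniq {d : ℕ} (g : (Fin d → ℤ) → ℂ) (hg : (Function.support g).Finite)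
    (h0 : ∀ ξ : Fin d → ℝ, ∑ᶠ n, g n * ee n ξ = 0) : ∀ n, g n = 0 := by
  classical
  have li : LinearIndependent ℂ (fun n : Fin d → ℤ => ⇑(chi n)) :=
    (linearIndependent_monoidHom (Multiplicative (Fin d → ℝ)) ℂ).comp chi chi_inj
  intro n
  by_cases hn : n ∈ hg.toFinset
  · refine linearIndependent_iff'.mp li hg.toFinset g ?_ n hn
    funext ξ
    have hsum : (∑ x ∈ hg.toFinset, g x • ⇑(chi x)) ξ
        = ∑ x ∈ hg.toFinset, g x * ee x ξ.toAdd := by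
      rw [Finset.sum_apply]
      exact Finset.sum_congr rfl fun x _ => rfl
    have hsupp : (Function.support fun x => g x * ee x ξ.toAdd) ⊆ ↑hg.toFinset := by
      intro x hx
      rw [Set.Finite.coe_toFinset]
      intro hx0
      exact hx (by simp [hx0])
    calc (∑ x ∈ hg.toFinset, g x • ⇑(chi x)) ξ
        = ∑ x ∈ hg.toFinset, g x * ee x ξ.toAdd := hsum
      _ = ∑ᶠ x, g x * ee x ξ.toAdd := (finsum_eq_sum_of_support_subset _ hsupp).symm
      _ = 0 := h0 _
      _ = (0 : Multiplicative (Fin d → ℝ) → ℂ) ξ := rfl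
  · rw [Set.Finite.mem_toFinset] at hn
    exact Function.notMem_support.mp hn

lemma ee_uniq₂ {d : ℕ} (g g' : (Fin d → ℤ) → ℂ) (hg : (Function.support g).Finite)
    (hg' : (Function.support g').Finite)
    (h0 : ∀ ξ : Fin d → ℝ, ∑ᶠ n, g n * ee n ξ = ∑ᶠ n, g' n * ee n ξ) : ∀ n, g n = g' n := by
  have hsub : (Function.support (g - g')).Finite :=
    (hg.union hg').subset (Function.support_sub g g')
  have key := ee_uniq (g - g') hsub ?_
  · intro n
    have := key n
    simp only [Pi.sub_apply] at this
    exact sub_eq_zero.mp this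
  · intro ξ
    have h1 : (Function.support fun n => g n * ee n ξ).Finite :=
      hg.subset (fun x hx h0x => hx (by simp [h0x]))
    have h2 : (Function.support fun n => g' n * ee n ξ).Finite :=
      hg'.subset (fun x hx h0x => hx (by simp [h0x]))
    calc ∑ᶠ n, (g - g') n * ee n ξ
        = ∑ᶠ n, (g n * ee n ξ - g' n * ee n ξ) := by
          exact finsum_congr fun n => by simp [sub_mul]
      _ = (∑ᶠ n, g n * ee n ξ) - ∑ᶠ n, g' n * ee n ξ := finsum_sub_distrib h1 h2
      _ = 0 := by rw [h0 ξ]; ring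

/-- The key abstract equivalence: a "twisted-shift" identity for exponential sums is
equivalent to the corresponding identity of the coefficients. -/
lemma finsum_shift_iff {d : ℕ} (g : (Fin d → ℤ) → ℂ) (hg : (Function.support g).Finite)
    (σ : (Fin d → ℤ) ≃ (Fin d → ℤ)) :
    (∀ ξ : Fin d → ℝ, ∑ᶠ n, g n * ee n ξ = ∑ᶠ n, g (σ.symm n) * ee n ξ)
      ↔ ∀ n, g (σ n) = g n := by
  constructor
  · intro hξ n
    have hg' : (Function.support fun n => g (σ.symm n)).Finite := by
      have : (Function.support fun n => g (σ.symm n)) = σ '' Function.support g := by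
        ext x
        simp only [Function.mem_support, Set.mem_image]
        constructor
        · intro hx; exact ⟨σ.symm x, hx, by simp⟩
        · rintro ⟨y, hy, rfl⟩; simpa using hy
      rw [this]
      exact hg.image σ
    have := ee_uniq₂ g (fun n => g (σ.symm n)) hg hg' hξ (σ n)
    simpa using this
  · intro hc ξ
    refine finsum_congr fun n => ?_
    have : g (σ.symm n) = g n := by
      have := hc (σ.symm n)
      simpa using this.symm
    rw [this]

lemma ee_mulVec {d : ℕ} (B : Matrix (Fin d) (Fin d) ℤ) (n : Fin d → ℤ) (ξ : Fin d → ℝ) :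
    ee n (fun i => ∑ j, (B j i : ℝ) * ξ j) = ee (B.mulVec n) ξ := by
  rw [ee, ee]
  congr 1
  congr 1
  push_cast [Matrix.mulVec, dotProduct]
  simp only [Finset.mul_sum, Finset.sum_mul]
  rw [Finset.sum_comm]
  exact Finset.sum_congr rfl fun j _ => Finset.sum_congr rfl fun i _ => by ring

set_option maxHeartbeats 1000000 in
/-- Lemma 13 of the paper: a mask is `H`-symmetric with respect to an integer
center `c` iff its polyphase components satisfy
`μ_{0j}(ξ) = μ_{0j}(M^*E^*M^{*-1}ξ) e^{2πi(r_j^E,ξ)} e^{2πi(M⁻¹(c-Ec),ξ)}`. -/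
theorem stmt13 {d : ℕ} (M : Matrix (Fin d) (Fin d) ℤ) (hMdil : IsDilation M)
    (m : ℕ) (hm : m = M.det.natAbs)
    (s : Fin m → (Fin d → ℤ))
    (hdig : ∀ n : Fin d → ℤ, ∃! k : Fin m, ∃ p : Fin d → ℤ, n = M.mulVec p + s k)
    (H : Set (Matrix (Fin d) (Fin d) ℤ))
    (hHfin : H.Finite) (hHone : (1 : Matrix (Fin d) (Fin d) ℤ) ∈ H)
    (hHmul : ∀ E ∈ H, ∀ F ∈ H, E * F ∈ H)
    (hHinv : ∀ E ∈ H, ∃ F ∈ H, E * F = 1)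
    (hHdet : ∀ E ∈ H, E.det = 1 ∨ E.det = -1)
    (hMH : ∀ E ∈ H, ∃ E' ∈ H, M * E = E' * M)
    (r : Matrix (Fin d) (Fin d) ℤ → Fin m → (Fin d → ℤ))
    (hr : ∀ E ∈ H, ∀ j : Fin m, E.mulVec (s j) = M.mulVec (r E j) + s j)
    (c : Fin d → ℤ)
    (q : Matrix (Fin d) (Fin d) ℤ → (Fin d → ℤ))
    (hq : ∀ E ∈ H, M.mulVec (q E) = c - E.mulVec c)
    (h : (Fin d → ℤ) →₀ ℂ)
    (μ : Fin m → (Fin d → ℝ) → ℂ)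
    (hμ : ∀ j (ξ : Fin d → ℝ), μ j ξ =
      (1 / Real.sqrt m : ℝ) * ∑ᶠ p : Fin d → ℤ,
        h (M.mulVec p + s j) *
          Complex.exp (2 * (Real.pi : ℂ) * Complex.I * ∑ i, (p i : ℂ) * (ξ i : ℂ))) :
    -- `H`-symmetry of the mask `m₀ = trig h` with respect to the center `c`
    (∀ E ∈ H, ∀ ξ : Fin d → ℝ, trig h ξ =
        Complex.exp (2 * (Real.pi : ℂ) * Complex.I *
            ∑ i, ((c i - E.mulVec c i : ℤ) : ℂ) * (ξ i : ℂ)) *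
          trig h (fun i => ∑ j, (E j i : ℝ) * ξ j)) ↔
    -- the corresponding symmetry of the polyphase components
    (∀ E ∈ H, ∀ j : Fin m, ∀ ξ : Fin d → ℝ, μ j ξ =
        μ j (((M.map (Int.cast : ℤ → ℝ))ᵀ * (E.map (Int.cast : ℤ → ℝ))ᵀ *
              ((M.map (Int.cast : ℤ → ℝ))ᵀ)⁻¹).mulVec ξ) *
          Complex.exp (2 * (Real.pi : ℂ) * Complex.I * ∑ i, (r E j i : ℂ) * (ξ i : ℂ)) *
          Complex.exp (2 * (Real.pi : ℂ) * Complex.I * ∑ i, (q E i : ℂ) * (ξ i : ℂ))) := by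
  classical
  -- Notation
  set Mr : Matrix (Fin d) (Fin d) ℝ := M.map (Int.cast : ℤ → ℝ) with hMr
  -- `M` has nonzero determinant
  have hdet0 : M.det ≠ 0 := by
    intro h0
    have hmapdet : ((M.map (Int.cast : ℤ → ℂ))).det = (M.det : ℂ) := by
      rw [show (M.map (Int.cast : ℤ → ℂ)) = (Int.castRingHom ℂ).mapMatrix M from rfl,
        ← RingHom.map_det]
      rfl
    have hroot : (Matrix.charpoly (M.map (Int.cast : ℤ → ℂ))).IsRoot 0 := by
      have hcoeff := Matrix.det_eq_sign_charpoly_coeff (M.map (Int.cast : ℤ → ℂ))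
      rw [hmapdet, h0] at hcoeff
      push_cast at hcoeff
      have h1 : ((-1 : ℂ)) ^ Fintype.card (Fin d) ≠ 0 := pow_ne_zero _ (by norm_num)
      have hc00 : (Matrix.charpoly (M.map (Int.cast : ℤ → ℂ))).coeff 0 = 0 := by
        rcases mul_eq_zero.mp hcoeff.symm with h' | h'
        · exact absurd h' h1
        · exact h'
      show Polynomial.eval 0 (Matrix.charpoly (M.map (Int.cast : ℤ → ℂ))) = 0
      rw [← Polynomial.coeff_zero_eq_eval_zero]
      exact hc00
    have := hMdil 0 hroot
    rw [norm_zero] at this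
    exact absurd this (by norm_num)
  have hdetR : Mr.det ≠ 0 := by
    have : Mr.det = (M.det : ℝ) := by
      rw [hMr, show (M.map (Int.cast : ℤ → ℝ)) = (Int.castRingHom ℝ).mapMatrix M from rfl,
        ← RingHom.map_det]
      rfl
    rw [this]
    exact_mod_cast hdet0
  haveI : Invertible Mr := Mr.invertibleOfIsUnitDet (isUnit_iff_ne_zero.mpr hdetR)
  -- injectivity of `p ↦ M.mulVec p`
  have castMulVec : ∀ (B : Matrix (Fin d) (Fin d) ℤ) (p : Fin d → ℤ),
      (fun i => ((B.mulVec p i : ℤ) : ℝ)) = (B.map (Int.cast : ℤ → ℝ)).mulVec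
        (fun i => ((p i : ℤ) : ℝ)) := by
    intro B p
    funext i
    simp only [Matrix.mulVec, dotProduct, Matrix.map_apply]
    push_cast
    rfl
  have hMinj : Function.Injective (M.mulVec : (Fin d → ℤ) → (Fin d → ℤ)) := by
    intro p p' hpp
    have h1 : Mr.mulVec (fun i => ((p i : ℤ) : ℝ)) = Mr.mulVec (fun i => ((p' i : ℤ) : ℝ)) := by
      rw [← castMulVec, ← castMulVec, hpp]
    have h2 : (fun i => ((p i : ℤ) : ℝ)) = (fun i => ((p' i : ℤ) : ℝ)) := by
      have := congrArg (fun v => Mr⁻¹.mulVec v) h1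
      simpa [Matrix.mulVec_mulVec, Matrix.nonsing_inv_mul Mr
        (isUnit_iff_ne_zero.mpr hdetR)] using this
    funext i
    have := congrFun h2 i
    exact_mod_cast this
  -- cancellation by `M` on the left for integer matrices
  have hMcancel : ∀ A B : Matrix (Fin d) (Fin d) ℤ, M * A = M * B → A = B := by
    intro A B hAB
    have h1 : Mr * A.map (Int.cast : ℤ → ℝ) = Mr * B.map (Int.cast : ℤ → ℝ) := by
      have := congrArg (fun X => X.map (Int.cast : ℤ → ℝ)) hAB
      simpa only [show ∀ X Y : Matrix (Fin d) (Fin d) ℤ,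
        (X * Y).map (Int.cast : ℤ → ℝ) = X.map (Int.cast : ℤ → ℝ) * Y.map (Int.cast : ℤ → ℝ) from
        fun X Y => Matrix.map_mul (f := Int.castRingHom ℝ), hMr] using this
    have h2 : A.map (Int.cast : ℤ → ℝ) = B.map (Int.cast : ℤ → ℝ) := by
      have := congrArg (fun X => Mr⁻¹ * X) h1
      simpa [← Matrix.mul_assoc, Matrix.nonsing_inv_mul Mr
        (isUnit_iff_ne_zero.mpr hdetR)] using this
    ext i k
    have h3 : ((A i k : ℤ) : ℝ) = B i k := by
      have := congrFun (congrFun h2 i) k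
      simpa [Matrix.map_apply] using this
    exact_mod_cast h3
  -- the conjugation `E ↦ M E M⁻¹` is a bijection of `H`; in particular every `E ∈ H`
  -- is `M F M⁻¹` for some `F ∈ H`.
  have conj : ∀ E ∈ H, ∃ F ∈ H, M * F = E * M := by
    haveI : Finite ↥H := hHfin
    have hf : ∀ E : ↥H, ∃ E' : ↥H, M * (E : Matrix (Fin d) (Fin d) ℤ) = (E' : _) * M := by
      intro E
      obtain ⟨E', hE', hEE⟩ := hMH E E.2
      exact ⟨⟨E', hE'⟩, hEE⟩
    choose f hfspec using hf
    have hfinj : Function.Injective f := by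
      intro E₁ E₂ h12
      have h1 := hfspec E₁
      have h2 := hfspec E₂
      rw [h12] at h1
      have : M * (E₁ : Matrix (Fin d) (Fin d) ℤ) = M * E₂ := by rw [h1, h2]
      exact Subtype.ext (hMcancel _ _ this)
    have hfsurj : Function.Surjective f := Finite.injective_iff_surjective.mp hfinj
    intro E hE
    obtain ⟨F, hF⟩ := hfsurj ⟨E, hE⟩
    refine ⟨F, F.2, ?_⟩
    have := hfspec F
    rw [hF] at this
    exact this
  -- two-sided inverses in `H`
  have hinv2 : ∀ E ∈ H, ∃ N : Matrix (Fin d) (Fin d) ℤ, E * N = 1 ∧ N * E = 1 := by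
    intro E hE
    obtain ⟨N, _, hN⟩ := hHinv E hE
    exact ⟨N, hN, mul_eq_one_comm.mp hN⟩
  -- the affine map `n ↦ E.mulVec n + v` as an equivalence of `ℤ^d`
  have mkEquiv : ∀ (E N : Matrix (Fin d) (Fin d) ℤ), E * N = 1 → N * E = 1 →
      ∀ v : Fin d → ℤ, ∃ σ : (Fin d → ℤ) ≃ (Fin d → ℤ),
        (∀ p, σ p = E.mulVec p + v) ∧ (∀ p, σ.symm p = N.mulVec (p - v)) := by
    intro E N hEN hNE v
    refine ⟨⟨fun p => E.mulVec p + v, fun p => N.mulVec (p - v), ?_, ?_⟩, fun p => rfl,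
      fun p => rfl⟩
    · intro p
      simp [Matrix.mulVec_mulVec, hNE]
    · intro p
      simp [Matrix.mulVec_mulVec, hEN, sub_add_cancel]
  -- support facts
  have hsupp_h : (Function.support fun n => h n).Finite := by
    have : (Function.support fun n => h n) ⊆ ↑h.support := fun x hx => by
      simpa [Finsupp.mem_support_iff] using hx
    exact (h.support.finite_toSet).subset this
  have hsupp_g : ∀ j : Fin m, (Function.support fun p => h (M.mulVec p + s j)).Finite := by
    intro j
    have hinj : Function.Injective fun p : Fin d → ℤ => M.mulVec p + s j := by
      intro p p' hpp
      apply hMinj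
      have := hpp
      simpa [add_left_inj] using this
    have : (Function.support fun p => h (M.mulVec p + s j))
        ⊆ (fun p : Fin d → ℤ => M.mulVec p + s j) ⁻¹' ↑h.support := by
      intro x hx
      simp only [Set.mem_preimage, Finset.mem_coe, Finsupp.mem_support_iff]
      exact hx
    exact (Set.Finite.preimage hinj.injOn (h.support.finite_toSet)).subset this
  -- trig as a finsum
  have trig_finsum : ∀ ξ : Fin d → ℝ, trig h ξ = ∑ᶠ n, h n * ee n ξ := by
    intro ξ
    have hsub : (Function.support fun n => h n * ee n ξ) ⊆ ↑h.support := by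
      intro x hx
      simp only [Finset.mem_coe, Finsupp.mem_support_iff]
      intro h0x
      exact hx (by simp [h0x])
    rw [finsum_eq_sum_of_support_subset _ hsub]
    rfl
  -- `√m ≠ 0`
  have hm0 : (0 : ℝ) < Real.sqrt m := by
    apply Real.sqrt_pos.mpr
    have : m ≠ 0 := by
      rw [hm]
      simpa [Int.natAbs_eq_zero] using hdet0
    positivity
  have hc₀ : ((1 / Real.sqrt m : ℝ) : ℂ) ≠ 0 := by
    simp only [ne_eq, Complex.ofReal_eq_zero]
    positivity
  -- The coefficient condition
  set P : Matrix (Fin d) (Fin d) ℤ → Prop :=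
    fun E => ∀ n, h (E.mulVec n + (c - E.mulVec c)) = h n with hP
  -- ### Step 1: mask symmetry for `E` is equivalent to `P E`
  have step1 : ∀ E ∈ H, (∀ ξ : Fin d → ℝ, trig h ξ =
      Complex.exp (2 * (Real.pi : ℂ) * Complex.I *
          ∑ i, ((c i - E.mulVec c i : ℤ) : ℂ) * (ξ i : ℂ)) *
        trig h (fun i => ∑ j, (E j i : ℝ) * ξ j)) ↔ P E := by
    intro E hE
    obtain ⟨N, hEN, hNE⟩ := hinv2 E hE
    obtain ⟨τ, hτ, hτsymm⟩ := mkEquiv E N hEN hNE (c - E.mulVec c)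
    have key : ∀ ξ : Fin d → ℝ,
        Complex.exp (2 * (Real.pi : ℂ) * Complex.I *
            ∑ i, ((c i - E.mulVec c i : ℤ) : ℂ) * (ξ i : ℂ)) *
          trig h (fun i => ∑ j, (E j i : ℝ) * ξ j)
        = ∑ᶠ n, h (τ.symm n) * ee n ξ := by
      intro ξ
      have h1 : Complex.exp (2 * (Real.pi : ℂ) * Complex.I *
            ∑ i, ((c i - E.mulVec c i : ℤ) : ℂ) * (ξ i : ℂ)) = ee (c - E.mulVec c) ξ := by
        rw [ee]
        congr 2
      have h2 : trig h (fun i => ∑ j, (E j i : ℝ) * ξ j)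
          = ∑ᶠ n, h n * ee (E.mulVec n) ξ := by
        rw [trig_finsum]
        exact finsum_congr fun n => by rw [ee_mulVec]
      rw [h1, h2, mul_finsum _ _]
      have h3 : ∀ n, ee (c - E.mulVec c) ξ * (h n * ee (E.mulVec n) ξ)
          = h (τ.symm (τ n)) * ee (τ n) ξ := by
        intro n
        rw [Equiv.symm_apply_apply, hτ, ee_add]
        ring
      calc ∑ᶠ n, ee (c - E.mulVec c) ξ * (h n * ee (E.mulVec n) ξ)
          = ∑ᶠ n, h (τ.symm (τ n)) * ee (τ n) ξ := finsum_congr h3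
        _ = ∑ᶠ n, h (τ.symm n) * ee n ξ :=
            finsum_comp_equiv τ (f := fun n => h (τ.symm n) * ee n ξ)
    constructor
    · intro hsym n
      have hiff := (finsum_shift_iff (fun n => h n) hsupp_h τ).mp ?_
      · have := hiff n
        rwa [hτ] at this
      · intro ξ
        rw [← trig_finsum, ← key ξ]
        exact hsym ξ
    · intro hPE ξ
      rw [key ξ, trig_finsum]
      exact (finsum_shift_iff (fun n => h n) hsupp_h τ).mpr
        (fun n => by rw [hτ]; exact hPE n) ξ
  -- ### Step 2: the polyphase condition for `(E, j)` is equivalent to `P E` on the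
  -- coset of `s j`.
  have step2 : ∀ E ∈ H, ∀ j : Fin m, (∀ ξ : Fin d → ℝ, μ j ξ =
      μ j (((M.map (Int.cast : ℤ → ℝ))ᵀ * (E.map (Int.cast : ℤ → ℝ))ᵀ *
            ((M.map (Int.cast : ℤ → ℝ))ᵀ)⁻¹).mulVec ξ) *
        Complex.exp (2 * (Real.pi : ℂ) * Complex.I * ∑ i, (r E j i : ℂ) * (ξ i : ℂ)) *
        Complex.exp (2 * (Real.pi : ℂ) * Complex.I * ∑ i, (q E i : ℂ) * (ξ i : ℂ))) ↔
      (∀ p : Fin d → ℤ, h (E.mulVec (M.mulVec p + s j) + (c - E.mulVec c))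
        = h (M.mulVec p + s j)) := by
    intro E hE j
    obtain ⟨F, hF, hMF⟩ := conj E hE
    obtain ⟨NF, hFN, hNF⟩ := hinv2 F hF
    obtain ⟨σ, hσ, hσsymm⟩ := mkEquiv F NF hFN hNF (r E j + q E)
    -- the matrix in the statement is `(F.map ℝ)ᵀ`
    have hmat : (M.map (Int.cast : ℤ → ℝ))ᵀ * (E.map (Int.cast : ℤ → ℝ))ᵀ *
        ((M.map (Int.cast : ℤ → ℝ))ᵀ)⁻¹ = (F.map (Int.cast : ℤ → ℝ))ᵀ := by
      have hmap : Mr * F.map (Int.cast : ℤ → ℝ) = E.map (Int.cast : ℤ → ℝ) * Mr := by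
        have := congrArg (fun X => X.map (Int.cast : ℤ → ℝ)) hMF
        simpa only [show ∀ X Y : Matrix (Fin d) (Fin d) ℤ,
          (X * Y).map (Int.cast : ℤ → ℝ) = X.map (Int.cast : ℤ → ℝ) * Y.map (Int.cast : ℤ → ℝ)
          from fun X Y => Matrix.map_mul (f := Int.castRingHom ℝ), hMr] using this
      have htr : Mrᵀ * (E.map (Int.cast : ℤ → ℝ))ᵀ = (F.map (Int.cast : ℤ → ℝ))ᵀ * Mrᵀ := by
        rw [← Matrix.transpose_mul, ← Matrix.transpose_mul, ← hmap]
      have hTdet : IsUnit (Mrᵀ).det := by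
        rw [Matrix.det_transpose]
        exact isUnit_iff_ne_zero.mpr hdetR
      rw [show M.map (Int.cast : ℤ → ℝ) = Mr from rfl, htr, Matrix.mul_assoc,
        Matrix.mul_nonsing_inv Mrᵀ hTdet, Matrix.mul_one]
    have hmatvec : ∀ ξ : Fin d → ℝ, (((M.map (Int.cast : ℤ → ℝ))ᵀ *
        (E.map (Int.cast : ℤ → ℝ))ᵀ * ((M.map (Int.cast : ℤ → ℝ))ᵀ)⁻¹).mulVec ξ)
        = fun i => ∑ k, (F k i : ℝ) * ξ k := by
      intro ξ
      rw [hmat]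
      funext i
      simp [Matrix.mulVec, dotProduct, Matrix.transpose_apply, Matrix.map_apply]
    -- the coefficient function on the coset
    set g : (Fin d → ℤ) → ℂ := fun p => h (M.mulVec p + s j) with hg
    -- key algebraic identity
    have halg : ∀ p : Fin d → ℤ, M.mulVec (σ p) + s j
        = E.mulVec (M.mulVec p + s j) + (c - E.mulVec c) := by
      intro p
      rw [hσ]
      have h1 : M.mulVec (F.mulVec p + (r E j + q E))
          = M.mulVec (F.mulVec p) + M.mulVec (r E j) + M.mulVec (q E) := by
        rw [Matrix.mulVec_add, Matrix.mulVec_add, add_assoc]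
      have h2 : M.mulVec (F.mulVec p) = E.mulVec (M.mulVec p) := by
        rw [Matrix.mulVec_mulVec, Matrix.mulVec_mulVec, hMF]
      have h3 : M.mulVec (r E j) = E.mulVec (s j) - s j := by
        rw [hr E hE j]; ring
      rw [h1, h2, h3, hq E hE, Matrix.mulVec_add]
      abel
    -- rewriting both sides of the polyphase condition
    have lhs_eq : ∀ ξ : Fin d → ℝ, μ j ξ
        = ((1 / Real.sqrt m : ℝ) : ℂ) * ∑ᶠ p, g p * ee p ξ := by
      intro ξ
      rw [hμ j ξ]
      rfl
    have rhs_eq : ∀ ξ : Fin d → ℝ,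
        μ j (((M.map (Int.cast : ℤ → ℝ))ᵀ * (E.map (Int.cast : ℤ → ℝ))ᵀ *
            ((M.map (Int.cast : ℤ → ℝ))ᵀ)⁻¹).mulVec ξ) *
          Complex.exp (2 * (Real.pi : ℂ) * Complex.I * ∑ i, (r E j i : ℂ) * (ξ i : ℂ)) *
          Complex.exp (2 * (Real.pi : ℂ) * Complex.I * ∑ i, (q E i : ℂ) * (ξ i : ℂ))
        = ((1 / Real.sqrt m : ℝ) : ℂ) * ∑ᶠ p, g (σ.symm p) * ee p ξ := by
      intro ξ
      rw [lhs_eq, hmatvec ξ]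
      have e1 : Complex.exp (2 * (Real.pi : ℂ) * Complex.I *
          ∑ i, (r E j i : ℂ) * (ξ i : ℂ)) = ee (r E j) ξ := rfl
      have e2 : Complex.exp (2 * (Real.pi : ℂ) * Complex.I *
          ∑ i, (q E i : ℂ) * (ξ i : ℂ)) = ee (q E) ξ := rfl
      rw [e1, e2]
      set ξF : Fin d → ℝ := fun i => ∑ k, (F k i : ℝ) * ξ k with hξF
      set A : ℂ := ee (r E j) ξ with hA
      set B : ℂ := ee (q E) ξ with hB
      have hfin0 : (Function.support fun p => g p * ee p ξF).Finite :=
        Set.Finite.subset (hsupp_g j) (fun x hx h0x => hx (by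
          show g x * ee x ξF = 0
          rw [show g x = 0 from h0x, zero_mul]))
      have hfin1 : (Function.support fun p => g p * ee p ξF * A).Finite :=
        Set.Finite.subset hfin0 (fun x hx h0x => hx (by
          show g x * ee x ξF * A = 0
          rw [show g x * ee x ξF = 0 from h0x, zero_mul]))
      have hterm : ∀ p, g p * ee p ξF * A * B = g (σ.symm (σ p)) * ee (σ p) ξ := by
        intro p
        rw [Equiv.symm_apply_apply, hξF, ee_mulVec, hσ, ee_add, ee_add, hA, hB]
        ring
      calc ((1 / Real.sqrt m : ℝ) : ℂ) * (∑ᶠ p, g p * ee p ξF) * A * B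
          = ((1 / Real.sqrt m : ℝ) : ℂ) * ((∑ᶠ p, g p * ee p ξF) * A * B) := by ring
        _ = ((1 / Real.sqrt m : ℝ) : ℂ) * ∑ᶠ p, g p * ee p ξF * A * B := by
            rw [finsum_mul _ A, finsum_mul _ B]
        _ = ((1 / Real.sqrt m : ℝ) : ℂ) * ∑ᶠ p, g (σ.symm (σ p)) * ee (σ p) ξ := by
            rw [finsum_congr hterm]
        _ = ((1 / Real.sqrt m : ℝ) : ℂ) * ∑ᶠ p, g (σ.symm p) * ee p ξ := by
            rw [finsum_comp_equiv σ (f := fun p => g (σ.symm p) * ee p ξ)]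
    constructor
    · intro hpoly p
      have hiff := (finsum_shift_iff g (hsupp_g j) σ).mp ?_
      · have := hiff p
        rw [hg] at this
        rw [← halg p]
        exact this
      · intro ξ
        have := hpoly ξ
        rw [lhs_eq, rhs_eq] at this
        exact mul_left_cancel₀ hc₀ this
    · intro hcoef ξ
      rw [lhs_eq, rhs_eq]
      congr 1
      exact (finsum_shift_iff g (hsupp_g j) σ).mpr
        (fun p => by rw [hg]; simp only []; rw [halg p]; exact hcoef p) ξ
  -- ### Step 3: assemble
  constructor
  · intro hsym E hE j ξ
    have hPE : P E := (step1 E hE).mp (hsym E hE)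
    exact (step2 E hE j).mpr (fun p => hPE _) ξ
  · intro hpoly E hE ξ
    have hPE : P E := by
      intro n
      obtain ⟨k, ⟨p, hp⟩, _⟩ := hdig n
      rw [hp]
      exact (step2 E hE k).mp (hpoly E hE k) p
    exact (step1 E hE).mpr hPE ξ
end

section
/- If the symmetry group G^axis = {±I_2, ±Y} with Y = [[−1,0],[0,1]] is a symmetry group with respect to a 2×2 integer dilation matrix M (i.e., MEM^{−1} ∈ G^axis for all E ∈ G^axis), then M is either diagonal, M = [[γ_1,0],[0,γ_2]], or antidiagonal, M = [[0,γ_1],[γ_2,0]], for some integers γ_1, γ_2. -/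
open Matrix

lemma det_ne_zero_of_isDilation {d : ℕ} (M : Matrix (Fin d) (Fin d) ℤ)
    (hM : IsDilation M) : M.det ≠ 0 := by
  intro h0
  have hdet : (M.map (Int.cast : ℤ → ℂ)).det = 0 := by
    rw [show M.map (Int.cast : ℤ → ℂ) = (Int.castRingHom ℂ).mapMatrix M from rfl,
      ← RingHom.map_det, h0]
    simp
  have hroot : (Matrix.charpoly (M.map (Int.cast : ℤ → ℂ))).IsRoot 0 := by
    have h := Matrix.det_eq_sign_charpoly_coeff (M.map (Int.cast : ℤ → ℂ))
    rw [hdet] at h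
    have hc : (Matrix.charpoly (M.map (Int.cast : ℤ → ℂ))).coeff 0 = 0 := by
      rcases mul_eq_zero.mp h.symm with h' | h'
      · exact absurd h' (pow_ne_zero _ (neg_ne_zero.mpr one_ne_zero))
      · exact h'
    simpa [Polynomial.IsRoot, ← Polynomial.coeff_zero_eq_eval_zero] using hc
  have h1 := hM 0 hroot
  simp at h1
  linarith

/-- If the axial symmetry group `G^axis = {±I₂, ±Y}` is a symmetry group with respect
to a 2×2 integer dilation matrix `M` (i.e. `MEM⁻¹ ∈ G^axis` for all `E`), then `M`
is diagonal or antidiagonal. -/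
theorem stmt15 (M : Matrix (Fin 2) (Fin 2) ℤ) (hM : IsDilation M)
    (G : Set (Matrix (Fin 2) (Fin 2) ℤ))
    (hG : G = {1, -1, !![(-1 : ℤ), 0; 0, 1], -!![(-1 : ℤ), 0; 0, 1]})
    (hsym : ∀ E ∈ G, ∃ E' ∈ G, M * E = E' * M) :
    (∃ γ1 γ2 : ℤ, M = !![γ1, 0; 0, γ2]) ∨ (∃ γ1 γ2 : ℤ, M = !![0, γ1; γ2, 0]) := by
  have hdet := det_ne_zero_of_isDilation M hM
  have hYmem : !![(-1 : ℤ), 0; 0, 1] ∈ G := by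
    rw [hG]; right; right; left; rfl
  obtain ⟨E', hE', heq⟩ := hsym _ hYmem
  have hMe := Matrix.eta_fin_two M
  set a := M 0 0; set b := M 0 1; set c := M 1 0; set d := M 1 1
  have hdet2 : a * d - b * c ≠ 0 := by
    rw [hMe] at hdet; simpa [Matrix.det_fin_two] using hdet
  rw [hG] at hE'
  rcases hE' with h | h | h | h
  · exfalso
    rw [h, one_mul, hMe] at heq
    have h00 := congrFun (congrFun heq 0) 0
    have h10 := congrFun (congrFun heq 1) 0
    simp [Matrix.mul_fin_two] at h00 h10
    have ha : a = 0 := by omega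
    have hc : c = 0 := by omega
    apply hdet2; rw [ha, hc]; ring
  · exfalso
    rw [h, hMe] at heq
    have h01 := congrFun (congrFun heq 0) 1
    have h11 := congrFun (congrFun heq 1) 1
    simp [Matrix.mul_fin_two] at h01 h11
    have hb : b = 0 := by omega
    have hd : d = 0 := by omega
    apply hdet2; rw [hb, hd]; ring
  · left
    rw [h, hMe] at heq
    have h01 := congrFun (congrFun heq 0) 1
    have h10 := congrFun (congrFun heq 1) 0
    simp [Matrix.mul_fin_two] at h01 h10
    have hb : b = 0 := by omega
    have hc : c = 0 := by omega
    exact ⟨a, d, by rw [hMe, hb, hc]⟩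
  · right
    simp only [Set.mem_singleton_iff] at h
    rw [h, hMe] at heq
    have h00 := congrFun (congrFun heq 0) 0
    have h11 := congrFun (congrFun heq 1) 1
    simp [Matrix.mul_fin_two] at h00 h11
    have ha : a = 0 := by omega
    have hd : d = 0 := by omega
    exact ⟨b, c, by rw [hMe, ha, hd]⟩
end
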